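/- arXiv:1902.07421 — 3 statements merged into one kernel-verified Lean document; each statement's English description precedes it below -/
import Mathlib

section
/- Let (C, K) be a cotorsion pair in an exact category B with C rigid (i.e., Ext¹_B(C, C) = 0). Then the subcategory H = CoCone(C, C) is closed under direct summands. -/
open CategoryTheory Limits ZeroObject

universe v u

variable (B : Type u)

/-- A (Quillen) exact structure on an additive category: a distinguished class of
kernel–cokernel pairs (short exact sequences), satisfying the exact category axioms. -/
structure ExactStr [Category.{v} B] [Preadditive B] [HasZeroObject B]
    [HasBinaryBiproducts B] where
  isSES : ∀ ⦃X Y Z : B⦄, (X ⟶ Y) → (Y ⟶ Z) → Prop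
  comp_eq_zero : ∀ {X Y Z : B} {i : X ⟶ Y} {d : Y ⟶ Z}, isSES i d → i ≫ d = 0
  is_kernel : ∀ {X Y Z : B} {i : X ⟶ Y} {d : Y ⟶ Z}, isSES i d →
      ∀ {W : B} (f : W ⟶ Y), f ≫ d = 0 → ∃! g : W ⟶ X, g ≫ i = f
  is_cokernel : ∀ {X Y Z : B} {i : X ⟶ Y} {d : Y ⟶ Z}, isSES i d →
      ∀ {W : B} (f : Y ⟶ W), i ≫ f = 0 → ∃! g : Z ⟶ W, d ≫ g = f
  iso_closed : ∀ {X Y Z X' Y' Z' : B} {i : X ⟶ Y} {d : Y ⟶ Z}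
      (eX : X' ≅ X) (eY : Y' ≅ Y) (eZ : Z' ≅ Z), isSES i d →
      isSES (eX.hom ≫ i ≫ eY.inv) (eY.hom ≫ d ≫ eZ.inv)
  id_isSES : ∀ X : B, isSES (𝟙 X) (0 : X ⟶ 0)
  infl_comp : ∀ {X Y Z : B} (i : X ⟶ Y) (i' : Y ⟶ Z),
      (∃ (W : B) (d : Y ⟶ W), isSES i d) → (∃ (W : B) (d : Z ⟶ W), isSES i' d) →
      ∃ (W : B) (d : Z ⟶ W), isSES (i ≫ i') d
  defl_comp : ∀ {X Y Z : B} (d : X ⟶ Y) (d' : Y ⟶ Z),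
      (∃ (W : B) (i : W ⟶ X), isSES i d) → (∃ (W : B) (i : W ⟶ Y), isSES i d') →
      ∃ (W : B) (i : W ⟶ X), isSES i (d ≫ d')
  pullback_defl : ∀ {X Y Z Z' : B} {i : X ⟶ Y} {d : Y ⟶ Z}, isSES i d →
      ∀ (f : Z' ⟶ Z), ∃ (Y' : B) (i' : X ⟶ Y') (d' : Y' ⟶ Z') (g : Y' ⟶ Y),
        isSES i' d' ∧ g ≫ d = d' ≫ f ∧ i' ≫ g = i
  pushout_infl : ∀ {X Y Z X' : B} {i : X ⟶ Y} {d : Y ⟶ Z}, isSES i d →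
      ∀ (f : X ⟶ X'), ∃ (Y' : B) (i' : X' ⟶ Y') (d' : Y' ⟶ Z) (g : Y ⟶ Y'),
        isSES i' d' ∧ i ≫ g = f ≫ i' ∧ g ≫ d' = d

variable {B} [Category.{v} B] [Preadditive B] [HasZeroObject B]
  [HasFiniteBiproducts B] [HasBinaryBiproducts B]

/-- An object is indecomposable if it is nonzero and any biproduct decomposition is trivial. -/
def Indec (X : B) : Prop :=
  ¬ IsZero X ∧ ∀ (A Y : B), Nonempty (X ≅ A ⊞ Y) → IsZero A ∨ IsZero Y

/-- `A` is a direct summand of `X`. -/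
def IsSummand (A X : B) : Prop := ∃ Y : B, Nonempty (X ≅ A ⊞ Y)

/-- A class of objects is closed under direct summands. -/
def SummandClosed (S : Set B) : Prop := ∀ A X : B, X ∈ S → IsSummand A X → A ∈ S

/-- `X` has no nonzero direct summand belonging to `S`. -/
def NoSummandIn (S : Set B) (X : B) : Prop :=
  ∀ A : B, IsSummand A X → A ∈ S → IsZero A

/-- Krull–Schmidt: every object is a finite biproduct of indecomposables with local
endomorphism rings. -/
def IsKrullSchmidt : Prop :=
  ∀ X : B, ∃ (n : ℕ) (f : Fin n → B),
    (∀ i, Indec (f i) ∧ IsLocalRing (End (f i))) ∧ Nonempty (X ≅ ⨁ f)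

namespace ExactStr

variable (E : ExactStr B)

/-- Projective object relative to the exact structure. -/
def Proj (P : B) : Prop :=
  ∀ ⦃X Y Z : B⦄ (i : X ⟶ Y) (d : Y ⟶ Z), E.isSES i d →
    ∀ f : P ⟶ Z, ∃ g : P ⟶ Y, g ≫ d = f

/-- Injective object relative to the exact structure. -/
def Inj (I : B) : Prop :=
  ∀ ⦃X Y Z : B⦄ (i : X ⟶ Y) (d : Y ⟶ Z), E.isSES i d →
    ∀ f : X ⟶ I, ∃ g : Y ⟶ I, i ≫ g = f

def projObjs : Set B := {P | E.Proj P}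
def injObjs : Set B := {I | E.Inj I}

def EnoughProj : Prop :=
  ∀ X : B, ∃ (P K : B) (i : K ⟶ P) (d : P ⟶ X), E.Proj P ∧ E.isSES i d

def EnoughInj : Prop :=
  ∀ X : B, ∃ (I C : B) (i : X ⟶ I) (d : I ⟶ C), E.Inj I ∧ E.isSES i d

/-- `Ext¹(X, Y) = 0`: every conflation `Y ↣ M ↠ X` splits. -/
def Ext1Zero (X Y : B) : Prop :=
  ∀ ⦃M : B⦄ (i : Y ⟶ M) (d : M ⟶ X), E.isSES i d → ∃ s : X ⟶ M, s ≫ d = 𝟙 X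

/-- `CoCone(S, T)`: objects `X` admitting a conflation `X ↣ S' ↠ T'`. -/
def CoCone (S T : Set B) : Set B :=
  {X | ∃ (S' T' : B) (i : X ⟶ S') (d : S' ⟶ T'), S' ∈ S ∧ T' ∈ T ∧ E.isSES i d}

/-- `Cone(S, T)`: objects `X` admitting a conflation `S' ↣ T' ↠ X`. -/
def Cone (S T : Set B) : Set B :=
  {X | ∃ (S' T' : B) (i : S' ⟶ T') (d : T' ⟶ X), S' ∈ S ∧ T' ∈ T ∧ E.isSES i d}

/-- `Ω S = CoCone(𝒫, S)`, the class of syzygies of objects of `S`. -/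
def OmegaSet (S : Set B) : Set B := E.CoCone E.projObjs S

/-- `Σ S = Cone(S, ℐ)`, the class of cosyzygies of objects of `S`. -/
def SigmaSet (S : Set B) : Set B := E.Cone S E.injObjs

/-- Iterated syzygy class `Ω^n S`. -/
def OmegaIter : ℕ → Set B → Set B
  | 0, S => S
  | n + 1, S => E.OmegaSet (OmegaIter n S)

/-- A class `S` is closed under extensions. -/
def ExtClosed (S : Set B) : Prop :=
  ∀ {A M C : B} (i : A ⟶ M) (d : M ⟶ C), E.isSES i d → A ∈ S → C ∈ S → M ∈ S

/-- `pd_B X ≤ n` in the exact category. -/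
def pdLE : ℕ → B → Prop
  | 0, X => E.Proj X
  | n + 1, X => ∃ (K P : B) (i : K ⟶ P) (d : P ⟶ X),
      E.Proj P ∧ E.isSES i d ∧ pdLE n K

/-- `ExtNZero n X Y` says `Ext^{n+1}(X, Y) = 0` (via dimension shifting along any
projective presentation). -/
def ExtNZero : ℕ → B → B → Prop
  | 0, X, Y => E.Ext1Zero X Y
  | n + 1, X, Y => ∀ (OX P : B) (i : OX ⟶ P) (d : P ⟶ X),
      E.Proj P → E.isSES i d → ExtNZero n OX Y

/-- `Ext^j(X, Y) = 0` for all `1 ≤ j ≤ m`. -/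
def ExtVanishUpTo (m : ℕ) (X Y : B) : Prop := ∀ i < m, E.ExtNZero i X Y

end ExactStr

/-- A cotorsion pair `(U, V)` on the exact category. -/
structure CotorsionPair (E : ExactStr B) (U V : Set B) : Prop where
  summandClosed_left : SummandClosed U
  summandClosed_right : SummandClosed V
  ext : ∀ ⦃X : B⦄, X ∈ U → ∀ ⦃Y : B⦄, Y ∈ V → E.Ext1Zero X Y
  resolve : ∀ X : B, ∃ (VB UB : B) (i : VB ⟶ UB) (d : UB ⟶ X),
      UB ∈ U ∧ VB ∈ V ∧ E.isSES i d
  coresolve : ∀ X : B, ∃ (VB UB : B) (i : X ⟶ VB) (d : VB ⟶ UB),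
      UB ∈ U ∧ VB ∈ V ∧ E.isSES i d

/-- A fully rigid cotorsion pair: `C` is rigid, strictly contains the projectives,
and every indecomposable object lies in `K` or in `H = CoCone(C, C)`. -/
structure FullyRigid (E : ExactStr B) (C K : Set B) : Prop where
  cp : CotorsionPair E C K
  rigid : ∀ ⦃X : B⦄, X ∈ C → ∀ ⦃Y : B⦄, Y ∈ C → E.Ext1Zero X Y
  nonproj : ∃ X ∈ C, ¬ E.Proj X
  indec_mem : ∀ X : B, Indec X → X ∈ K ∨ X ∈ E.CoCone C C

/-- A morphism factors through an object of `S`. -/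
def FactorsThru (S : Set B) {X Y : B} (f : X ⟶ Y) : Prop :=
  ∃ Z : B, Z ∈ S ∧ ∃ (g : X ⟶ Z) (h : Z ⟶ Y), f = g ≫ h

/-- The ideal-quotient relation: two morphisms are identified iff their difference
factors through an object of `S`. -/
def quotRel (S : Set B) : HomRel B := fun {X Y} (f g : X ⟶ Y) => FactorsThru S (f - g)

/-- The quotient category `B/S`. -/
abbrev QuotCat (S : Set B) := CategoryTheory.Quotient (quotRel S)

/-- Projective dimension at most `n` in an abelian category. -/
def pdLEQ {Q : Type*} [Category Q] [Abelian Q] : ℕ → Q → Prop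
  | 0, X => Projective X
  | n + 1, X => ∃ (K P : Q) (i : K ⟶ P) (d : P ⟶ X) (w : i ≫ d = 0),
      Projective P ∧ (ShortComplex.mk i d w).ShortExact ∧ pdLEQ n K

/-- Injective dimension at most `n` in an abelian category. -/
def idLEQ {Q : Type*} [Category Q] [Abelian Q] : ℕ → Q → Prop
  | 0, X => Injective X
  | n + 1, X => ∃ (I C : Q) (i : X ⟶ I) (d : I ⟶ C) (w : i ≫ d = 0),
      Injective I ∧ (ShortComplex.mk i d w).ShortExact ∧ idLEQ n C


set_option linter.unusedSectionVars false
namespace ExactStr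

variable (E : ExactStr B)

theorem isSES_of_eq {X Y Z : B} {i i' : X ⟶ Y} {d d' : Y ⟶ Z} (h : E.isSES i d)
    (hi : i = i') (hd : d = d') : E.isSES i' d' := hi ▸ hd ▸ h

theorem midIso {X Y Z Y₂ : B} {i : X ⟶ Y} {d : Y ⟶ Z} (h : E.isSES i d) (e : Y ≅ Y₂) :
    E.isSES (i ≫ e.hom) (e.inv ≫ d) := by
  simpa using E.iso_closed (Iso.refl X) e.symm (Iso.refl Z) h

theorem infl_cancel {X M Z T : B} {i : X ⟶ M} {d : M ⟶ Z} (h : E.isSES i d)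
    {x y : T ⟶ X} (hxy : x ≫ i = y ≫ i) : x = y := by
  obtain ⟨u, -, hu⟩ := E.is_kernel h (x ≫ i)
    (by rw [Category.assoc, E.comp_eq_zero h, Limits.comp_zero])
  rw [hu x rfl, hu y hxy.symm]

theorem defl_cancel {X M Z T : B} {i : X ⟶ M} {d : M ⟶ Z} (h : E.isSES i d)
    {x y : Z ⟶ T} (hxy : d ≫ x = d ≫ y) : x = y := by
  obtain ⟨u, -, hu⟩ := E.is_cokernel h (d ≫ x)
    (by rw [← Category.assoc, E.comp_eq_zero h, Limits.zero_comp])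
  rw [hu x rfl, hu y hxy.symm]

theorem coker_unique {X M Z Z' : B} {i : X ⟶ M} {d : M ⟶ Z} (h : E.isSES i d)
    (d' : M ⟶ Z') (h0 : i ≫ d' = 0)
    (huniv : ∀ (T : B) (f : M ⟶ T), i ≫ f = 0 → ∃! g : Z' ⟶ T, d' ≫ g = f) :
    E.isSES i d' := by
  obtain ⟨w, hw, -⟩ := E.is_cokernel h d' h0
  obtain ⟨w', hw', -⟩ := huniv Z d (E.comp_eq_zero h)
  have hww' : w ≫ w' = 𝟙 Z :=
    E.defl_cancel h (by rw [← Category.assoc, hw, hw', Category.comp_id])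
  have hw'w : w' ≫ w = 𝟙 Z' := by
    obtain ⟨u, -, hu⟩ := huniv Z' d' h0
    rw [hu (w' ≫ w) (by show d' ≫ (w' ≫ w) = d'; rw [← Category.assoc, hw', hw]),
      hu (𝟙 Z') (by simp)]
  have := E.iso_closed (Iso.refl X) (Iso.refl M) (⟨w', w, hw'w, hww'⟩ : Z' ≅ Z) h
  simpa [hw] using this

theorem ker_unique {X X' M Z : B} {i : X ⟶ M} {d : M ⟶ Z} (h : E.isSES i d)
    (i' : X' ⟶ M) (h0 : i' ≫ d = 0)
    (huniv : ∀ (T : B) (f : T ⟶ M), f ≫ d = 0 → ∃! g : T ⟶ X', g ≫ i' = f) :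
    E.isSES i' d := by
  obtain ⟨w, hw, -⟩ := E.is_kernel h i' h0
  obtain ⟨w', hw', -⟩ := huniv X i (E.comp_eq_zero h)
  have h1 : w' ≫ w = 𝟙 X :=
    E.infl_cancel h (by rw [Category.assoc, hw, hw', Category.id_comp])
  have h2 : w ≫ w' = 𝟙 X' := by
    obtain ⟨u, -, hu⟩ := huniv X' i' h0
    rw [hu (w ≫ w') (by show (w ≫ w') ≫ i' = i'; rw [Category.assoc, hw', hw]),
      hu (𝟙 X') (by simp)]
  have := E.iso_closed (⟨w, w', h2, h1⟩ : X' ≅ X) (Iso.refl M) (Iso.refl Z) h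
  simpa [hw] using this

theorem split_iso {X M Z : B} {i : X ⟶ M} {d : M ⟶ Z} (h : E.isSES i d)
    (s : Z ⟶ M) (hs : s ≫ d = 𝟙 Z) :
    ∃ e : M ≅ X ⊞ Z, i ≫ e.hom = biprod.inl ∧ e.inv ≫ d = biprod.snd := by
  obtain ⟨r, hr, -⟩ := E.is_kernel h (𝟙 M - d ≫ s)
    (by simp [Preadditive.sub_comp, Category.assoc, hs])
  have hir : i ≫ r = 𝟙 X := by
    apply E.infl_cancel h
    rw [Category.assoc, hr, Preadditive.comp_sub, Category.comp_id, Category.id_comp,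
      ← Category.assoc, E.comp_eq_zero h, Limits.zero_comp, sub_zero]
  have hsr : s ≫ r = 0 := by
    apply E.infl_cancel h
    rw [Category.assoc, hr, Preadditive.comp_sub, Category.comp_id,
      ← Category.assoc, hs, Category.id_comp, sub_self, Limits.zero_comp]
  refine ⟨⟨biprod.lift r d, biprod.desc i s, ?_, ?_⟩, ?_, ?_⟩
  · rw [biprod.lift_desc, hr]; abel
  · apply biprod.hom_ext' <;> apply biprod.hom_ext <;>
      simp [hir, hsr, hs, E.comp_eq_zero h]
  · apply biprod.hom_ext <;> simp [hir, E.comp_eq_zero h]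
  · apply biprod.hom_ext' <;> simp [hs, E.comp_eq_zero h]

theorem ses_zero_id (W : B) : E.isSES (0 : (0 : B) ⟶ W) (𝟙 W) := by
  obtain ⟨P, i', d', g, hP, -, -⟩ := E.pullback_defl (E.id_isSES 0) (0 : W ⟶ 0)
  have hi' : i' = 0 := (Limits.isZero_zero B).eq_of_src _ _
  obtain ⟨u, hu, -⟩ := E.is_cokernel hP (𝟙 P) (by rw [hi', Limits.zero_comp])
  have hud : u ≫ d' = 𝟙 W :=
    E.defl_cancel hP (by rw [← Category.assoc, hu, Category.id_comp, Category.comp_id])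
  have := E.midIso hP (⟨d', u, hu, hud⟩ : P ≅ W)
  refine E.isSES_of_eq this ((Limits.isZero_zero B).eq_of_src _ _) ?_
  simpa using hud

theorem ses_inl_snd (A Y : B) : E.isSES (biprod.inl : A ⟶ A ⊞ Y) biprod.snd := by
  obtain ⟨P, i', d', g, hP, -, hgd⟩ := E.pushout_infl (E.ses_zero_id Y) (0 : (0 : B) ⟶ A)
  obtain ⟨e, he1, he2⟩ := E.split_iso hP g hgd
  have := E.midIso hP e
  rwa [he1, he2] at this

theorem ses_inr_fst (A Y : B) : E.isSES (biprod.inr : Y ⟶ A ⊞ Y) biprod.fst := by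
  have h := E.ses_inl_snd Y A
  have := E.iso_closed (Iso.refl Y) (biprod.braiding A Y) (Iso.refl A) h
  refine E.isSES_of_eq this ?_ ?_
  · apply biprod.hom_ext <;> simp [biprod.braiding]
  · simp [biprod.braiding]

theorem ses_map_id {X M Z : B} {i : X ⟶ M} {p : M ⟶ Z} (h : E.isSES i p) (W : B) :
    E.isSES (biprod.map i (𝟙 W)) (biprod.fst ≫ p : M ⊞ W ⟶ Z) := by
  obtain ⟨Kk, ι, hK⟩ := E.defl_comp (biprod.fst : M ⊞ W ⟶ M) p
    ⟨W, biprod.inr, E.ses_inr_fst M W⟩ ⟨X, i, h⟩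
  refine E.ker_unique hK (biprod.map i (𝟙 W))
    (by rw [← Category.assoc, biprod.map_fst, Category.assoc, E.comp_eq_zero h,
      Limits.comp_zero]) ?_
  intro T f hf
  obtain ⟨g₁, hg₁, hg₁u⟩ := E.is_kernel h (f ≫ biprod.fst)
    (by rw [Category.assoc]; exact hf)
  refine ⟨biprod.lift g₁ (f ≫ biprod.snd), ?_, ?_⟩
  · apply biprod.hom_ext <;> simp [hg₁]
  · intro y hy
    apply biprod.hom_ext
    · simp only [biprod.lift_fst]
      apply hg₁u
      have := congrArg (· ≫ biprod.fst) hy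
      simpa [biprod.map_fst] using this
    · have := congrArg (· ≫ biprod.snd) hy
      simpa using this

theorem ses_id_map {X M Z : B} {i : X ⟶ M} {p : M ⟶ Z} (h : E.isSES i p) (W : B) :
    E.isSES (biprod.map (𝟙 W) i) (biprod.snd ≫ p : W ⊞ M ⟶ Z) := by
  obtain ⟨Kk, ι, hK⟩ := E.defl_comp (biprod.snd : W ⊞ M ⟶ M) p
    ⟨W, biprod.inl, E.ses_inl_snd W M⟩ ⟨X, i, h⟩
  refine E.ker_unique hK (biprod.map (𝟙 W) i)
    (by rw [← Category.assoc, biprod.map_snd, Category.assoc, E.comp_eq_zero h,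
      Limits.comp_zero]) ?_
  intro T f hf
  obtain ⟨g₂, hg₂, hg₂u⟩ := E.is_kernel h (f ≫ biprod.snd)
    (by rw [Category.assoc]; exact hf)
  refine ⟨biprod.lift (f ≫ biprod.fst) g₂, ?_, ?_⟩
  · apply biprod.hom_ext <;> simp [hg₂]
  · intro y hy
    apply biprod.hom_ext
    · have := congrArg (· ≫ biprod.fst) hy
      simpa using this
    · simp only [biprod.lift_snd]
      apply hg₂u
      have := congrArg (· ≫ biprod.snd) hy
      simpa [biprod.map_snd] using this

theorem ses_map {X M Z X' M' Z' : B} {i : X ⟶ M} {p : M ⟶ Z} {i' : X' ⟶ M'} {p' : M' ⟶ Z'}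
    (h : E.isSES i p) (h' : E.isSES i' p') :
    E.isSES (biprod.map i i') (biprod.map p p') := by
  obtain ⟨Q, dQ, hQ⟩ := E.infl_comp (biprod.map i (𝟙 X')) (biprod.map (𝟙 M) i')
    ⟨_, _, E.ses_map_id h X'⟩ ⟨_, _, E.ses_id_map h' M⟩
  have hcomp : biprod.map i (𝟙 X') ≫ biprod.map (𝟙 M) i' = biprod.map i i' := by
    apply biprod.hom_ext' <;> simp
  rw [hcomp] at hQ
  refine E.coker_unique hQ (biprod.map p p') ?_ ?_
  · apply biprod.hom_ext'
    · rw [← Category.assoc, biprod.inl_map, Category.assoc, biprod.inl_map,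
        ← Category.assoc, E.comp_eq_zero h, Limits.zero_comp, Limits.comp_zero]
    · rw [← Category.assoc, biprod.inr_map, Category.assoc, biprod.inr_map,
        ← Category.assoc, E.comp_eq_zero h', Limits.zero_comp, Limits.comp_zero]
  · intro T t ht
    obtain ⟨k₁, hk₁, -⟩ := E.is_cokernel h (biprod.inl ≫ t)
      (by rw [← Category.assoc, ← biprod.inl_map (f := i) (g := i'), Category.assoc, ht,
        Limits.comp_zero])
    obtain ⟨k₂, hk₂, -⟩ := E.is_cokernel h' (biprod.inr ≫ t)
      (by rw [← Category.assoc, ← biprod.inr_map (f := i) (g := i'), Category.assoc, ht,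
        Limits.comp_zero])
    refine ⟨biprod.desc k₁ k₂, ?_, ?_⟩
    · apply biprod.hom_ext'
      · rw [← Category.assoc, biprod.inl_map, Category.assoc, biprod.inl_desc, hk₁]
      · rw [← Category.assoc, biprod.inr_map, Category.assoc, biprod.inr_desc, hk₂]
    · intro y hy
      apply biprod.hom_ext'
      · rw [biprod.inl_desc]
        refine E.defl_cancel h ?_
        rw [hk₁, ← hy]; simp only [← Category.assoc, biprod.inl_map]
      · rw [biprod.inr_desc]
        refine E.defl_cancel h' ?_
        rw [hk₂, ← hy]; simp only [← Category.assoc, biprod.inr_map]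

theorem lift_of_ext {X M Z W : B} {i : X ⟶ M} {d : M ⟶ Z} (h : E.isSES i d)
    (f : X ⟶ W) (hext : E.Ext1Zero Z W) : ∃ v : M ⟶ W, i ≫ v = f := by
  obtain ⟨P, i', d', g, hP, hc1, hc2⟩ := E.pushout_infl h f
  obtain ⟨s, hs⟩ := hext i' d' hP
  obtain ⟨r, hr, -⟩ := E.is_kernel hP (𝟙 P - d' ≫ s)
    (by simp [Preadditive.sub_comp, Category.assoc, hs])
  have hir : i' ≫ r = 𝟙 W := by
    apply E.infl_cancel hP
    rw [Category.assoc, hr, Preadditive.comp_sub, Category.comp_id, Category.id_comp,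
      ← Category.assoc, E.comp_eq_zero hP, Limits.zero_comp, sub_zero]
  exact ⟨g ≫ r, by rw [← Category.assoc, hc1, Category.assoc, hir, Category.comp_id]⟩

theorem ext1_fst {Z Z' W : B} (h1 : E.Ext1Zero Z W) (h2 : E.Ext1Zero Z' W) :
    E.Ext1Zero (Z ⊞ Z') W := by
  intro M i d h
  obtain ⟨P₁, i₁, d₁, g₁, hP₁, hc₁, -⟩ := E.pullback_defl h (biprod.inl : Z ⟶ Z ⊞ Z')
  obtain ⟨P₂, i₂, d₂, g₂, hP₂, hc₂, -⟩ := E.pullback_defl h (biprod.inr : Z' ⟶ Z ⊞ Z')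
  obtain ⟨s₁, hs₁⟩ := h1 i₁ d₁ hP₁
  obtain ⟨s₂, hs₂⟩ := h2 i₂ d₂ hP₂
  refine ⟨biprod.desc (s₁ ≫ g₁) (s₂ ≫ g₂), ?_⟩
  apply biprod.hom_ext'
  · rw [← Category.assoc, biprod.inl_desc, Category.assoc, hc₁, ← Category.assoc, hs₁,
      Category.id_comp, Category.comp_id]
  · rw [← Category.assoc, biprod.inr_desc, Category.assoc, hc₂, ← Category.assoc, hs₂,
      Category.id_comp, Category.comp_id]

theorem ext1_snd {Z W W' : B} (h1 : E.Ext1Zero Z W) (h2 : E.Ext1Zero Z W') :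
    E.Ext1Zero Z (W ⊞ W') := by
  intro M i d h
  obtain ⟨v₁, hv₁⟩ := E.lift_of_ext h (biprod.fst : W ⊞ W' ⟶ W) h1
  obtain ⟨v₂, hv₂⟩ := E.lift_of_ext h (biprod.snd : W ⊞ W' ⟶ W') h2
  have hret : i ≫ biprod.lift v₁ v₂ = 𝟙 (W ⊞ W') := by
    apply biprod.hom_ext <;> simp [hv₁, hv₂]
  obtain ⟨s, hds, -⟩ := E.is_cokernel h (𝟙 M - biprod.lift v₁ v₂ ≫ i)
    (by rw [Preadditive.comp_sub, Category.comp_id, ← Category.assoc, hret,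
      Category.id_comp, sub_self])
  refine ⟨s, E.defl_cancel h ?_⟩
  rw [← Category.assoc, hds, Preadditive.sub_comp, Category.id_comp, Category.assoc,
    E.comp_eq_zero h, Limits.comp_zero, sub_zero, Category.comp_id]

end ExactStr

theorem sum_mem_left {E : ExactStr B} {C K : Set B} (hcp : CotorsionPair E C K)
    {A A' : B} (hA : A ∈ C) (hA' : A' ∈ C) : (A ⊞ A') ∈ C := by
  obtain ⟨Vr, Ur, ir, dr, hUr, hVr, hses⟩ := hcp.resolve (A ⊞ A')
  obtain ⟨s, hs⟩ := E.ext1_fst (hcp.ext hA hVr) (hcp.ext hA' hVr) ir dr hses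
  obtain ⟨e, -, -⟩ := E.split_iso hses s hs
  exact hcp.summandClosed_left _ Ur hUr ⟨Vr, ⟨e.trans (biprod.braiding _ _)⟩⟩
/-- Lemma 2.6: for a cotorsion pair `(C, K)` with `C` rigid, `H = CoCone(C, C)` is
closed under direct summands. -/
theorem stmt4 (k : Type*) [Field k] [Linear k B]
    (E : ExactStr B) (hKS : IsKrullSchmidt (B := B)) (hEP : E.EnoughProj) (hEI : E.EnoughInj)
    (C K : Set B) (hcp : CotorsionPair E C K)
    (hrigid : ∀ x ∈ C, ∀ y ∈ C, E.Ext1Zero x y) :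
    SummandClosed (E.CoCone C C) := by
  intro A X hX hAX
  obtain ⟨Y, ⟨eX⟩⟩ := hAX
  obtain ⟨C₁, C₂, j₀, q, hC₁, hC₂, hj₀⟩ := hX
  have hj : E.isSES (eX.inv ≫ j₀) q := by
    simpa using E.iso_closed eX.symm (Iso.refl C₁) (Iso.refl C₂) hj₀
  set j : A ⊞ Y ⟶ C₁ := eX.inv ≫ j₀ with hjdef
  clear_value j
  clear hjdef hj₀
  obtain ⟨V, U, a, b, hU, hV, ha⟩ := hcp.coresolve A
  obtain ⟨V', U', a', b', hU', hV', ha'⟩ := hcp.coresolve Y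
  have hf : E.isSES (biprod.map a a') (biprod.map b b') := E.ses_map ha ha'
  set f : A ⊞ Y ⟶ V ⊞ V' := biprod.map a a' with hfdef
  set g : V ⊞ V' ⟶ U ⊞ U' := biprod.map b b' with hgdef
  clear_value f g
  clear hfdef hgdef
  -- comparison maps
  obtain ⟨φ, hφ⟩ := E.lift_of_ext hj f (E.ext1_snd (hcp.ext hC₂ hV) (hcp.ext hC₂ hV'))
  obtain ⟨ψ, hψ⟩ := E.lift_of_ext hf j
    (E.ext1_fst (hrigid U hU C₁ hC₁) (hrigid U' hU' C₁ hC₁))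
  -- Conflation 1 : lift j f with cokernel C₂ ⊞ (V ⊞ V')
  obtain ⟨Q₀, d₀, h₀⟩ := E.infl_comp j (biprod.inl : C₁ ⟶ C₁ ⊞ (V ⊞ V'))
    ⟨_, _, hj⟩ ⟨_, _, E.ses_inl_snd _ _⟩
  have hcok1 : E.isSES (j ≫ biprod.inl) (biprod.map q (𝟙 (V ⊞ V'))) := by
    refine E.coker_unique h₀ _ ?_ ?_
    · rw [Category.assoc, biprod.inl_map, ← Category.assoc, E.comp_eq_zero hj,
        Limits.zero_comp]
    · intro T t ht
      have ht' : j ≫ biprod.inl ≫ t = 0 := by rwa [← Category.assoc]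
      obtain ⟨kk, hkk, -⟩ := E.is_cokernel hj (biprod.inl ≫ t) ht'
      refine ⟨biprod.desc kk (biprod.inr ≫ t), ?_, ?_⟩
      · apply biprod.hom_ext'
        · rw [← Category.assoc, biprod.inl_map, Category.assoc, biprod.inl_desc, hkk]
        · rw [← Category.assoc, biprod.inr_map, Category.id_comp, biprod.inr_desc]
      · intro y hy
        apply biprod.hom_ext'
        · rw [biprod.inl_desc]
          refine E.defl_cancel hj ?_
          rw [hkk, ← hy]; simp only [← Category.assoc, biprod.inl_map]
        · rw [biprod.inr_desc, ← hy]
          simp only [← Category.assoc, biprod.inr_map, Category.id_comp]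
  have hτ : ∀ x : C₁ ⟶ V ⊞ V',
      biprod.desc (biprod.lift (𝟙 C₁) x) biprod.inr ≫
        biprod.desc (biprod.lift (𝟙 C₁) (-x)) biprod.inr = 𝟙 (C₁ ⊞ (V ⊞ V')) := by
    intro x
    apply biprod.hom_ext' <;> apply biprod.hom_ext <;>
      simp [biprod.lift_desc, Preadditive.add_comp]
  let τ : C₁ ⊞ (V ⊞ V') ≅ C₁ ⊞ (V ⊞ V') :=
    ⟨biprod.desc (biprod.lift (𝟙 C₁) φ) biprod.inr,
     biprod.desc (biprod.lift (𝟙 C₁) (-φ)) biprod.inr, hτ φ, by simpa using hτ (-φ)⟩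
  have hS1 := E.midIso hcok1 τ
  have hji : (j ≫ biprod.inl) ≫ τ.hom = biprod.lift j f := by
    show (j ≫ biprod.inl) ≫ biprod.desc (biprod.lift (𝟙 C₁) φ) biprod.inr = _
    rw [Category.assoc, biprod.inl_desc]
    apply biprod.hom_ext <;> simp [hφ]
  rw [hji] at hS1
  -- Conflation 2 : lift j f with cokernel C₁ ⊞ (U ⊞ U')
  obtain ⟨Q₂, d₂, h₂⟩ := E.infl_comp f (biprod.inr : (V ⊞ V') ⟶ C₁ ⊞ (V ⊞ V'))
    ⟨_, _, hf⟩ ⟨_, _, E.ses_inr_fst _ _⟩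
  have hcok2 : E.isSES (f ≫ biprod.inr) (biprod.map (𝟙 C₁) g) := by
    refine E.coker_unique h₂ _ ?_ ?_
    · rw [Category.assoc, biprod.inr_map, ← Category.assoc, E.comp_eq_zero hf,
        Limits.zero_comp]
    · intro T t ht
      have ht' : f ≫ biprod.inr ≫ t = 0 := by rwa [← Category.assoc]
      obtain ⟨kk, hkk, -⟩ := E.is_cokernel hf (biprod.inr ≫ t) ht'
      refine ⟨biprod.desc (biprod.inl ≫ t) kk, ?_, ?_⟩
      · apply biprod.hom_ext'
        · rw [← Category.assoc, biprod.inl_map, Category.id_comp, biprod.inl_desc]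
        · rw [← Category.assoc, biprod.inr_map, Category.assoc, biprod.inr_desc, hkk]
      · intro y hy
        apply biprod.hom_ext'
        · rw [biprod.inl_desc, ← hy]
          simp only [← Category.assoc, biprod.inl_map, Category.id_comp]
        · rw [biprod.inr_desc]
          refine E.defl_cancel hf ?_
          rw [hkk, ← hy]; simp only [← Category.assoc, biprod.inr_map]
  have hτ' : ∀ x : V ⊞ V' ⟶ C₁,
      biprod.desc biprod.inl (biprod.lift x (𝟙 _)) ≫
        biprod.desc biprod.inl (biprod.lift (-x) (𝟙 _)) = 𝟙 (C₁ ⊞ (V ⊞ V')) := by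
    intro x
    apply biprod.hom_ext' <;> apply biprod.hom_ext <;>
      simp [biprod.lift_desc, Preadditive.add_comp]
  let τ' : C₁ ⊞ (V ⊞ V') ≅ C₁ ⊞ (V ⊞ V') :=
    ⟨biprod.desc biprod.inl (biprod.lift ψ (𝟙 _)),
     biprod.desc biprod.inl (biprod.lift (-ψ) (𝟙 _)), hτ' ψ, by simpa using hτ' (-ψ)⟩
  have hS2 := E.midIso hcok2 τ'
  have hji' : (f ≫ biprod.inr) ≫ τ'.hom = biprod.lift j f := by
    show (f ≫ biprod.inr) ≫ biprod.desc biprod.inl (biprod.lift ψ (𝟙 _)) = _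
    rw [Category.assoc, biprod.inr_desc]
    apply biprod.hom_ext <;> simp [hψ]
  rw [hji'] at hS2
  -- Compare the two cokernels of lift j f
  obtain ⟨w, hw, -⟩ := E.is_cokernel hS1 _ (E.comp_eq_zero hS2)
  obtain ⟨w', hw', -⟩ := E.is_cokernel hS2 _ (E.comp_eq_zero hS1)
  have hww' : w ≫ w' = 𝟙 _ :=
    E.defl_cancel hS1 (by rw [← Category.assoc, hw, hw', Category.comp_id])
  have hw'w : w' ≫ w = 𝟙 _ :=
    E.defl_cancel hS2 (by rw [← Category.assoc, hw', hw, Category.comp_id])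
  -- conclude V ∈ C
  have hCU : (C₁ ⊞ (U ⊞ U')) ∈ C := sum_mem_left hcp hC₁ (sum_mem_left hcp hU hU')
  have hVV' : (V ⊞ V') ∈ C := by
    refine hcp.summandClosed_left _ _ hCU ⟨C₂, ⟨?_⟩⟩
    exact (⟨w, w', hww', hw'w⟩ : C₂ ⊞ (V ⊞ V') ≅ C₁ ⊞ (U ⊞ U')).symm.trans
      (biprod.braiding _ _)
  have hVC : V ∈ C := hcp.summandClosed_left V (V ⊞ V') hVV' ⟨V', ⟨Iso.refl _⟩⟩
  exact ⟨V, U, a, b, hVC, hU, ha⟩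
end

section
/- Let (C, K) be a fully rigid cotorsion pair in an exact category B, and suppose K admits a cotorsion pair (K, D). Then the subcategory (ΣD)/I is the class of enough injectives in the abelian quotient category B/K: every object of ΣD is injective in B/K, and every object of B/K embeds into an object of (ΣD)/I. -/
open CategoryTheory Limits ZeroObject

universe v u

variable (B : Type u)

variable {B} [Category.{v} B] [Preadditive B] [HasZeroObject B]
  [HasFiniteBiproducts B] [HasBinaryBiproducts B]

set_option linter.unusedSectionVars false
namespace StmtAux

open CategoryTheory Limits

universe v' u'

variable {B : Type u'} [Category.{v'} B] [Preadditive B] [HasZeroObject B]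
  [HasFiniteBiproducts B] [HasBinaryBiproducts B]

variable {E : ExactStr B}

section Basics

lemma defl_cancel {X Y Z : B} {i : X ⟶ Y} {d : Y ⟶ Z} (h : E.isSES i d)
    {W : B} {x y : Z ⟶ W} (hxy : d ≫ x = d ≫ y) : x = y := by
  have h0 : i ≫ d ≫ x = 0 := by
    rw [← Category.assoc, E.comp_eq_zero h, zero_comp]
  obtain ⟨g, -, hu⟩ := E.is_cokernel h (d ≫ x) h0
  exact (hu x rfl).trans (hu y hxy.symm).symm

lemma infl_cancel {X Y Z : B} {i : X ⟶ Y} {d : Y ⟶ Z} (h : E.isSES i d)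
    {W : B} {x y : W ⟶ X} (hxy : x ≫ i = y ≫ i) : x = y := by
  have h0 : (x ≫ i) ≫ d = 0 := by
    rw [Category.assoc, E.comp_eq_zero h, comp_zero]
  obtain ⟨g, -, hu⟩ := E.is_kernel h (x ≫ i) h0
  exact (hu x rfl).trans (hu y hxy.symm).symm

/-- From a retraction of the inflation, get a section of the deflation. -/
lemma sec_of_retr {X Y Z : B} {i : X ⟶ Y} {d : Y ⟶ Z} (h : E.isSES i d)
    (r : Y ⟶ X) (hr : i ≫ r = 𝟙 X) :
    ∃ s : Z ⟶ Y, s ≫ d = 𝟙 Z ∧ d ≫ s = 𝟙 Y - r ≫ i := by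
  have h0 : i ≫ (𝟙 Y - r ≫ i) = 0 := by
    rw [Preadditive.comp_sub, Category.comp_id, ← Category.assoc, hr, Category.id_comp, sub_self]
  obtain ⟨s, hs, -⟩ := E.is_cokernel h (𝟙 Y - r ≫ i) h0
  refine ⟨s, ?_, hs⟩
  apply defl_cancel h
  rw [← Category.assoc, hs, Preadditive.sub_comp, Category.id_comp, Category.assoc,
    E.comp_eq_zero h, comp_zero, sub_zero, Category.comp_id]

/-- From a section of the deflation, get a retraction of the inflation. -/
lemma retr_of_sec {X Y Z : B} {i : X ⟶ Y} {d : Y ⟶ Z} (h : E.isSES i d)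
    (s : Z ⟶ Y) (hs : s ≫ d = 𝟙 Z) :
    ∃ r : Y ⟶ X, i ≫ r = 𝟙 X ∧ r ≫ i = 𝟙 Y - d ≫ s := by
  have h0 : (𝟙 Y - d ≫ s) ≫ d = 0 := by
    rw [Preadditive.sub_comp, Category.id_comp, Category.assoc, hs, Category.comp_id, sub_self]
  obtain ⟨r, hriq, -⟩ := E.is_kernel h (𝟙 Y - d ≫ s) h0
  refine ⟨r, ?_, hriq⟩
  apply infl_cancel h
  rw [Category.assoc, hriq, Preadditive.comp_sub, Category.comp_id, ← Category.assoc,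
    E.comp_eq_zero h, zero_comp, sub_zero, Category.id_comp]

/-- A split conflation exhibits the middle object as a biproduct. -/
lemma split_iso {X Y Z : B} {i : X ⟶ Y} {d : Y ⟶ Z} (h : E.isSES i d)
    (s : Z ⟶ Y) (hs : s ≫ d = 𝟙 Z) : Nonempty (Y ≅ X ⊞ Z) := by
  obtain ⟨r, hir, hri⟩ := retr_of_sec h s hs
  have hsr : s ≫ r = 0 := by
    apply infl_cancel h
    rw [Category.assoc, hri, Preadditive.comp_sub, Category.comp_id, ← Category.assoc, hs,
      Category.id_comp, sub_self, zero_comp]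
  refine ⟨⟨biprod.lift r d, biprod.desc i s, ?_, ?_⟩⟩
  · rw [biprod.lift_desc, hri]
    abel
  · apply biprod.hom_ext' <;> apply biprod.hom_ext <;>
      simp [hir, hsr, hs, E.comp_eq_zero h]

lemma summand_left {X Y Z : B} {i : X ⟶ Y} {d : Y ⟶ Z} (h : E.isSES i d)
    (s : Z ⟶ Y) (hs : s ≫ d = 𝟙 Z) : IsSummand X Y :=
  ⟨Z, split_iso h s hs⟩

end Basics

section Cotorsion

variable {B : Type u'} [Category.{v'} B] [Preadditive B] [HasZeroObject B]
  [HasFiniteBiproducts B] [HasBinaryBiproducts B]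

variable {E : ExactStr B}

/-- An injective object is `Ext`-orthogonal on the right to everything. -/
lemma ext1Zero_of_inj {Y : B} (hY : E.Inj Y) (X : B) : E.Ext1Zero X Y := by
  intro M i d hses
  obtain ⟨r, hr⟩ := hY i d hses (𝟙 Y)
  obtain ⟨s, hs, -⟩ := sec_of_retr hses r hr
  exact ⟨s, hs⟩

/-- Lift a map along a deflation, given `Ext`-vanishing. -/
lemma lift_along_defl {A M T : B} {i : A ⟶ M} {d : M ⟶ T} (h : E.isSES i d)
    {T₀ : B} (b : T₀ ⟶ T) (hext : E.Ext1Zero T₀ A) :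
    ∃ b' : T₀ ⟶ M, b' ≫ d = b := by
  obtain ⟨V, i', d', g, hses, hcomm, hker⟩ := E.pullback_defl h b
  obtain ⟨s, hs⟩ := hext i' d' hses
  exact ⟨s ≫ g, by rw [Category.assoc, hcomm, ← Category.assoc, hs, Category.id_comp]⟩

/-- `Ext1Zero` is additive in the second variable. -/
lemma ext1Zero_biprod_right {U X₁ X₂ : B} (h₁ : E.Ext1Zero U X₁) (h₂ : E.Ext1Zero U X₂) :
    E.Ext1Zero U (X₁ ⊞ X₂) := by
  intro M i d hses
  obtain ⟨M₁, i₁, d₁, g₁, hses₁, hc₁, hd₁⟩ := E.pushout_infl hses (biprod.fst : X₁ ⊞ X₂ ⟶ X₁)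
  obtain ⟨M₂, i₂, d₂, g₂, hses₂, hc₂, hd₂⟩ := E.pushout_infl hses (biprod.snd : X₁ ⊞ X₂ ⟶ X₂)
  obtain ⟨s₁, hs₁⟩ := h₁ i₁ d₁ hses₁
  obtain ⟨s₂, hs₂⟩ := h₂ i₂ d₂ hses₂
  obtain ⟨r₁, hr₁, -⟩ := retr_of_sec hses₁ s₁ hs₁
  obtain ⟨r₂, hr₂, -⟩ := retr_of_sec hses₂ s₂ hs₂
  have hretr : i ≫ biprod.lift (g₁ ≫ r₁) (g₂ ≫ r₂) = 𝟙 (X₁ ⊞ X₂) := by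
    apply biprod.hom_ext
    · rw [Category.assoc, biprod.lift_fst, ← Category.assoc, hc₁, Category.assoc, hr₁,
        Category.comp_id, Category.id_comp]
    · rw [Category.assoc, biprod.lift_snd, ← Category.assoc, hc₂, Category.assoc, hr₂,
        Category.comp_id, Category.id_comp]
  obtain ⟨s, hs, -⟩ := sec_of_retr hses _ hretr
  exact ⟨s, hs⟩

variable {C K D : Set B}

/-- Injective objects belong to the right class of any (complete) cotorsion pair. -/
lemma inj_mem_K (cp : CotorsionPair E C K) {I : B} (hI : E.Inj I) : I ∈ K := by
  obtain ⟨VB, UB, i, d, hUB, hVB, hses⟩ := cp.coresolve I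
  obtain ⟨r, hr⟩ := hI i d hses (𝟙 I)
  obtain ⟨s, hs, -⟩ := sec_of_retr hses r hr
  exact cp.summandClosed_right I VB hVB (summand_left hses s hs)

/-- The right class of a cotorsion pair is closed under binary biproducts. -/
lemma K_biprod (cp : CotorsionPair E C K) {X₁ X₂ : B} (h₁ : X₁ ∈ K) (h₂ : X₂ ∈ K) :
    (X₁ ⊞ X₂) ∈ K := by
  obtain ⟨VB, UB, i, d, hUB, hVB, hses⟩ := cp.coresolve (X₁ ⊞ X₂)
  obtain ⟨s, hs⟩ := ext1Zero_biprod_right (cp.ext hUB h₁) (cp.ext hUB h₂) i d hses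
  exact cp.summandClosed_right _ VB hVB (summand_left hses s hs)

end Cotorsion

section Quot

variable {B : Type u'} [Category.{v'} B] [Preadditive B] [HasZeroObject B]
  [HasFiniteBiproducts B] [HasBinaryBiproducts B]

variable {E : ExactStr B} {C K D : Set B}

lemma factorsThru_comp_left {S : Set B} {X Y Z : B} (f : X ⟶ Y) {g : Y ⟶ Z}
    (hg : FactorsThru S g) : FactorsThru S (f ≫ g) := by
  obtain ⟨W, hW, a, b, hab⟩ := hg
  exact ⟨W, hW, f ≫ a, b, by rw [hab, Category.assoc]⟩

lemma factorsThru_comp_right {S : Set B} {X Y Z : B} {f : X ⟶ Y} (g : Y ⟶ Z)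
    (hf : FactorsThru S f) : FactorsThru S (f ≫ g) := by
  obtain ⟨W, hW, a, b, hab⟩ := hf
  exact ⟨W, hW, a, b ≫ g, by rw [hab, Category.assoc]⟩

lemma factorsThru_neg {S : Set B} {X Y : B} {f : X ⟶ Y} (hf : FactorsThru S f) :
    FactorsThru S (-f) := by
  obtain ⟨W, hW, a, b, hab⟩ := hf
  exact ⟨W, hW, a, -b, by rw [hab, Preadditive.comp_neg]⟩

lemma factorsThru_add (cp : CotorsionPair E C K) {X Y : B} {f g : X ⟶ Y}
    (hf : FactorsThru K f) (hg : FactorsThru K g) : FactorsThru K (f + g) := by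
  obtain ⟨W₁, hW₁, a₁, b₁, hab₁⟩ := hf
  obtain ⟨W₂, hW₂, a₂, b₂, hab₂⟩ := hg
  exact ⟨W₁ ⊞ W₂, K_biprod cp hW₁ hW₂, biprod.lift a₁ a₂, biprod.desc b₁ b₂, by
    rw [biprod.lift_desc, hab₁, hab₂]⟩

lemma factorsThru_zero (cp : CotorsionPair E C K) (X Y : B) :
    FactorsThru K (0 : X ⟶ Y) := by
  obtain ⟨VB, UB, i, d, hUB, hVB, hses⟩ := cp.coresolve X
  exact ⟨VB, hVB, 0, 0, by simp⟩

lemma quot_congruence (cp : CotorsionPair E C K) : Congruence (quotRel K) where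
  equivalence := by
    intro X Y
    constructor
    · intro f
      show FactorsThru K (f - f)
      rw [sub_self]
      exact factorsThru_zero cp _ _
    · intro f g h
      show FactorsThru K (g - f)
      rw [show g - f = -(f - g) by abel]
      exact factorsThru_neg h
    · intro f g h hfg hgh
      show FactorsThru K (f - h)
      rw [show f - h = (f - g) + (g - h) by abel]
      exact factorsThru_add cp hfg hgh
  comp_left := by
    intro X Y Z f g g' h
    show FactorsThru K (f ≫ g - f ≫ g')
    rw [← Preadditive.comp_sub]
    exact factorsThru_comp_left f h
  comp_right := by
    intro X Y Z f f' g h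
    show FactorsThru K (f ≫ g - f' ≫ g)
    rw [← Preadditive.sub_comp]
    exact factorsThru_comp_right g h

lemma hom_eq_iff (cp : CotorsionPair E C K) {X Y : B} (f g : X ⟶ Y) :
    (Quotient.functor (quotRel K)).map f = (Quotient.functor (quotRel K)).map g ↔
      FactorsThru K (f - g) := by
  have := quot_congruence cp
  exact Quotient.functor_map_eq_iff (quotRel K) f g

lemma mono_Q_of (cp : CotorsionPair E C K) {X Y : B} (m : X ⟶ Y)
    (hm : ∀ {T : B} (t : T ⟶ X), FactorsThru K (t ≫ m) → FactorsThru K t) :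
    Mono ((Quotient.functor (quotRel K)).map m) := by
  constructor
  rintro ⟨T⟩ u v huv
  obtain ⟨u₀, rfl⟩ := (Quotient.functor (quotRel K)).map_surjective u
  obtain ⟨v₀, rfl⟩ := (Quotient.functor (quotRel K)).map_surjective v
  rw [← Functor.map_comp, ← Functor.map_comp, hom_eq_iff cp] at huv
  rw [hom_eq_iff cp]
  apply hm
  rw [Preadditive.sub_comp]
  exact huv

lemma factors_of_monoQ (cp : CotorsionPair E C K) {X Y : B} (m : X ⟶ Y)
    (hm : Mono ((Quotient.functor (quotRel K)).map m)) {T : B} (t : T ⟶ X)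
    (h : FactorsThru K (t ≫ m)) : FactorsThru K t := by
  have h1 : (Quotient.functor (quotRel K)).map (t ≫ m) =
      (Quotient.functor (quotRel K)).map ((0 : T ⟶ X) ≫ m) := by
    rw [hom_eq_iff cp]
    rw [zero_comp, sub_zero]
    exact h
  rw [Functor.map_comp, Functor.map_comp] at h1
  have h2 := (cancel_mono ((Quotient.functor (quotRel K)).map m)).mp h1
  rw [hom_eq_iff cp] at h2
  rw [sub_zero] at h2
  exact h2

end Quot

section Core

variable {B : Type u'} [Category.{v'} B] [Preadditive B] [HasZeroObject B]
  [HasFiniteBiproducts B] [HasBinaryBiproducts B]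

variable {E : ExactStr B}

/-- Universal property (pushout-style) for a morphism of conflations which is the
identity on the cokernel end. -/
lemma pushout_ump {X Y Z X' Y' : B} {i : X ⟶ Y} {d : Y ⟶ Z} (hYZ : E.isSES i d)
    {i' : X' ⟶ Y'} {d' : Y' ⟶ Z} (hYZ' : E.isSES i' d')
    (f : X ⟶ X') (g : Y ⟶ Y') (hcomm : i ≫ g = f ≫ i') (hd : g ≫ d' = d)
    {T : B} (α : Y ⟶ T) (β : X' ⟶ T) (hαβ : i ≫ α = f ≫ β) :
    ∃ ω : Y' ⟶ T, g ≫ ω = α ∧ i' ≫ ω = β := by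
  obtain ⟨V, j', d'', h, hses2, hco, hdd⟩ := E.pushout_infl hYZ' β
  -- `hco : i' ≫ h = β ≫ j'`, `hdd : h ≫ d'' = d'`
  have h0 : i ≫ (g ≫ h - α ≫ j') = 0 := by
    rw [Preadditive.comp_sub, ← Category.assoc, hcomm, Category.assoc, hco, ← Category.assoc,
      ← Category.assoc, hαβ, Category.assoc, sub_self]
  obtain ⟨c, hc, -⟩ := E.is_cokernel hYZ (g ≫ h - α ≫ j') h0
  have hcd : c ≫ d'' = 𝟙 Z := by
    apply defl_cancel hYZ
    rw [← Category.assoc, hc, Preadditive.sub_comp, Category.assoc, hdd, Category.assoc,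
      E.comp_eq_zero hses2, comp_zero, sub_zero, hd, Category.comp_id]
  obtain ⟨ρ, hρ1, hρ2⟩ := retr_of_sec hses2 c hcd
  have hcρ : c ≫ ρ = 0 := by
    apply infl_cancel hses2
    rw [Category.assoc, hρ2, Preadditive.comp_sub, Category.comp_id, ← Category.assoc, hcd,
      Category.id_comp, sub_self, zero_comp]
  refine ⟨h ≫ ρ, ?_, ?_⟩
  · have hgh : g ≫ h = d ≫ c + α ≫ j' := by rw [hc]; abel
    rw [← Category.assoc, hgh, Preadditive.add_comp, Category.assoc, Category.assoc, hcρ,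
      comp_zero, zero_add, hρ1, Category.comp_id]
  · rw [← Category.assoc, hco, Category.assoc, hρ1, Category.comp_id]

/-- The two structure maps into the middle of a pushed-out conflation are jointly epic. -/
lemma conf_jointly_epi {D' I Z D'' M : B} {e : D' ⟶ I} {p : I ⟶ Z} (h1 : E.isSES e p)
    {e' : D'' ⟶ M} {p' : M ⟶ Z} (h2 : E.isSES e' p')
    (ι : I ⟶ M) (hι : ι ≫ p' = p) {T : B} {x y : M ⟶ T}
    (h3 : ι ≫ x = ι ≫ y) (h4 : e' ≫ x = e' ≫ y) : x = y := by
  have h0 : e' ≫ (x - y) = 0 := by rw [Preadditive.comp_sub, h4, sub_self]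
  obtain ⟨c, hc, -⟩ := E.is_cokernel h2 (x - y) h0
  have hpc : p ≫ c = 0 := by
    rw [← hι, Category.assoc, hc, Preadditive.comp_sub, h3, sub_self]
  have hc0 : c = 0 := defl_cancel h1 (by rw [hpc, comp_zero])
  have hxy : x - y = 0 := by rw [← hc, hc0, comp_zero]
  exact sub_eq_zero.mp hxy

variable {C K D : Set B}

/-- Key splitting lemma: a quotient-monic map between `ΣD`-objects is a split mono
modulo morphisms factoring through `K`. -/
lemma star (hKD : CotorsionPair E K D) (hinjK : ∀ ⦃I₀ : B⦄, E.Inj I₀ → I₀ ∈ K)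
    {Z Y : B} (hZ : Z ∈ E.SigmaSet D) (hY : Y ∈ E.SigmaSet D) (m : Z ⟶ Y)
    (hm : ∀ {T : B} (t : T ⟶ Z), FactorsThru K (t ≫ m) → FactorsThru K t) :
    ∃ r : Y ⟶ Z, FactorsThru K (m ≫ r - 𝟙 Z) := by
  obtain ⟨D', I, e, p, hD', hI, hconfZ⟩ := hZ
  obtain ⟨D'', I'', e'', p'', hD'', hI'', hconfY⟩ := hY
  -- lift `p ≫ m` along `p''`
  obtain ⟨μ, hμ⟩ := lift_along_defl hconfY (p ≫ m) (hKD.ext (hinjK hI) hD'')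
  -- induced map on kernels
  have h0 : (e ≫ μ) ≫ p'' = 0 := by
    rw [Category.assoc, hμ, ← Category.assoc, E.comp_eq_zero hconfZ, zero_comp]
  obtain ⟨ν, hν, -⟩ := E.is_kernel hconfY (e ≫ μ) h0
  -- push out the conflation of `Z` along `ν`
  obtain ⟨M, eν, pν, ι, hconfM, hι1, hι2⟩ := E.pushout_infl hconfZ ν
  -- `hι1 : e ≫ ι = ν ≫ eν`, `hι2 : ι ≫ pν = p`
  obtain ⟨ζ, hζ1, hζ2⟩ := pushout_ump hconfZ hconfM ν ι hι1 hι2 μ e'' (by rw [hν])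
  -- `pν ≫ m` factors through the injective `I''`
  have hfac : pν ≫ m = ζ ≫ p'' := by
    apply conf_jointly_epi hconfZ hconfM ι hι2
    · rw [← Category.assoc, ← Category.assoc, hι2, hζ1, hμ]
    · rw [← Category.assoc, ← Category.assoc, E.comp_eq_zero hconfM, zero_comp, hζ2,
        E.comp_eq_zero hconfY]
  have hpνm : FactorsThru K (pν ≫ m) := ⟨I'', hinjK hI'', ζ, p'', hfac⟩
  obtain ⟨K₂, hK₂, a, b, hab⟩ := hm pν hpνm
  -- lift `b` along `p` and produce `ρ` with `ρ ≫ p = pν`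
  obtain ⟨b', hb'⟩ := lift_along_defl hconfZ b (hKD.ext hK₂ hD')
  have hρp : (a ≫ b') ≫ p = pν := by rw [Category.assoc, hb', ← hab]
  -- induced maps
  have h1 : (eν ≫ a ≫ b') ≫ p = 0 := by
    rw [Category.assoc, hρp, E.comp_eq_zero hconfM]
  obtain ⟨φ, hφ, -⟩ := E.is_kernel hconfZ (eν ≫ a ≫ b') h1
  have h2 : (ι ≫ a ≫ b' - 𝟙 I) ≫ p = 0 := by
    rw [Preadditive.sub_comp, Category.id_comp]
    simp only [Category.assoc]
    rw [hb', ← hab, hι2, sub_self]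
  obtain ⟨σ₀, hσ, -⟩ := E.is_kernel hconfZ (ι ≫ a ≫ b' - 𝟙 I) h2
  have hkey : ν ≫ φ = 𝟙 D' + e ≫ σ₀ := by
    apply infl_cancel hconfZ
    calc (ν ≫ φ) ≫ e = ν ≫ (φ ≫ e) := by simp only [Category.assoc]
      _ = (ν ≫ eν) ≫ a ≫ b' := by rw [hφ]; simp only [Category.assoc]
      _ = e ≫ ι ≫ a ≫ b' := by rw [← hι1]; simp only [Category.assoc]
      _ = e ≫ ((ι ≫ a ≫ b' - 𝟙 I) + 𝟙 I) := by rw [sub_add_cancel]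
      _ = e ≫ σ₀ ≫ e + e := by
            rw [← hσ, Preadditive.comp_add, Category.comp_id]
      _ = (𝟙 D' + e ≫ σ₀) ≫ e := by
            rw [Preadditive.add_comp, Category.id_comp, Category.assoc]; abel
  -- build `r`
  obtain ⟨W, u, w, θ, hconfW, hθ1, hθ2⟩ := E.pushout_infl hconfY φ
  -- `hθ1 : e'' ≫ θ = φ ≫ u`, `hθ2 : θ ≫ w = p''`
  obtain ⟨ρ', hρ'⟩ := hI u w hconfW e
  have h3 : u ≫ ρ' ≫ p = 0 := by
    rw [← Category.assoc, hρ', E.comp_eq_zero hconfZ]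
  obtain ⟨r, hr, -⟩ := E.is_cokernel hconfW (ρ' ≫ p) h3
  -- the error term
  have hα : e ≫ μ ≫ θ ≫ ρ' = e + e ≫ σ₀ ≫ e := by
    calc e ≫ μ ≫ θ ≫ ρ' = (e ≫ μ) ≫ θ ≫ ρ' := by simp only [Category.assoc]
      _ = (ν ≫ e'') ≫ θ ≫ ρ' := by rw [hν]
      _ = ν ≫ (e'' ≫ θ) ≫ ρ' := by simp only [Category.assoc]
      _ = ν ≫ (φ ≫ u) ≫ ρ' := by rw [hθ1]
      _ = (ν ≫ φ) ≫ (u ≫ ρ') := by simp only [Category.assoc]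
      _ = (𝟙 D' + e ≫ σ₀) ≫ e := by rw [hkey, hρ']
      _ = e + e ≫ σ₀ ≫ e := by
            rw [Preadditive.add_comp, Category.id_comp, Category.assoc]
  have h4 : e ≫ (μ ≫ θ ≫ ρ' - 𝟙 I - σ₀ ≫ e) = 0 := by
    rw [Preadditive.comp_sub, Preadditive.comp_sub, hα, Category.comp_id, ← Category.assoc]
    abel
  obtain ⟨β₁, hβ, -⟩ := E.is_cokernel hconfZ (μ ≫ θ ≫ ρ' - 𝟙 I - σ₀ ≫ e) h4
  refine ⟨r, I, hinjK hI, β₁, p, ?_⟩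
  apply defl_cancel hconfZ
  have hpmr : p ≫ m ≫ r = (μ ≫ θ ≫ ρ') ≫ p := by
    calc p ≫ m ≫ r = (p ≫ m) ≫ r := by simp only [Category.assoc]
      _ = μ ≫ p'' ≫ r := by rw [← hμ]; simp only [Category.assoc]
      _ = μ ≫ (θ ≫ w) ≫ r := by rw [hθ2]
      _ = μ ≫ θ ≫ (w ≫ r) := by simp only [Category.assoc]
      _ = μ ≫ θ ≫ ρ' ≫ p := by rw [hr]
      _ = (μ ≫ θ ≫ ρ') ≫ p := by simp only [Category.assoc]
  have hexp : μ ≫ θ ≫ ρ' = 𝟙 I + σ₀ ≫ e + p ≫ β₁ := by rw [hβ]; abel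
  rw [Preadditive.comp_sub, Category.comp_id, hpmr, hexp]
  rw [Preadditive.add_comp, Preadditive.add_comp, Category.id_comp, Category.assoc,
    Category.assoc, E.comp_eq_zero hconfZ, comp_zero, add_zero]
  abel

end Core
section Main

variable {B : Type u'} [Category.{v'} B] [Preadditive B] [HasZeroObject B]
  [HasFiniteBiproducts B] [HasBinaryBiproducts B]

variable {E : ExactStr B} {C K D : Set B}

/-- Every object admits a quotient-mono into an object of `ΣD`. -/
lemma embed (hKD : CotorsionPair E K D) (hEI : E.EnoughInj) (X : B) :
    ∃ (Y₀ : B), Y₀ ∈ E.SigmaSet D ∧ ∃ m : X ⟶ Y₀,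
      ∀ {T : B} (t : T ⟶ X), FactorsThru K (t ≫ m) → FactorsThru K t := by
  obtain ⟨D₁, K₁, i₁, dX, hK₁, hD₁, hconf1⟩ := hKD.resolve X
  obtain ⟨I₁, SK, κ, pI, hinjI₁, hconf2⟩ := hEI K₁
  obtain ⟨Y₀, q, hconf3⟩ := E.infl_comp i₁ κ ⟨X, dX, hconf1⟩ ⟨SK, pI, hconf2⟩
  have hY₀ : Y₀ ∈ E.SigmaSet D := ⟨D₁, I₁, i₁ ≫ κ, q, hD₁, hinjI₁, hconf3⟩
  -- the induced map `m : X ⟶ Y₀`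
  have h0 : i₁ ≫ κ ≫ q = 0 := by
    rw [← Category.assoc, E.comp_eq_zero hconf3]
  obtain ⟨m, hm, -⟩ := E.is_cokernel hconf1 (κ ≫ q) h0
  -- the induced map `r : Y₀ ⟶ SK`
  have h1 : (i₁ ≫ κ) ≫ pI = 0 := by
    rw [Category.assoc, E.comp_eq_zero hconf2, comp_zero]
  obtain ⟨r, hr, -⟩ := E.is_cokernel hconf3 pI h1
  have hmr : m ≫ r = 0 := by
    apply defl_cancel hconf1
    rw [← Category.assoc, hm, Category.assoc, hr, E.comp_eq_zero hconf2, comp_zero]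
  -- `m` is a monomorphism in `B`
  have hmono : ∀ {T' : B} (y : T' ⟶ X), y ≫ m = 0 → y = 0 := by
    intro T' y hy
    obtain ⟨Vy, iy, vy, gy, hconfV, hcomm, hk⟩ := E.pullback_defl hconf1 y
    -- `hcomm : gy ≫ dX = vy ≫ y`, `hk : iy ≫ gy = i₁`
    have h2 : (gy ≫ κ) ≫ q = 0 := by
      rw [Category.assoc, ← hm, ← Category.assoc, hcomm, Category.assoc, hy, comp_zero]
    obtain ⟨z, hz, -⟩ := E.is_kernel hconf3 (gy ≫ κ) h2
    have hzi : z ≫ i₁ = gy := by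
      apply infl_cancel hconf2
      rw [← hz, Category.assoc]
    have h3 : vy ≫ y = 0 := by
      rw [← hcomm, ← hzi, Category.assoc, E.comp_eq_zero hconf1, comp_zero]
    exact defl_cancel hconfV (by rw [h3, comp_zero])
  refine ⟨Y₀, hY₀, m, ?_⟩
  intro T t hfac
  obtain ⟨K₀, hK₀, a, b, hab⟩ := hfac
  obtain ⟨v, hv⟩ := lift_along_defl hconf3 b (hKD.ext hK₀ hD₁)
  have h4 : (a ≫ v) ≫ pI = 0 := by
    have hvpI : v ≫ pI = b ≫ r := by
      rw [← hv, Category.assoc, hr]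
    rw [Category.assoc, hvpI, ← Category.assoc, ← hab, Category.assoc, hmr, comp_zero]
  obtain ⟨c, hc, -⟩ := E.is_kernel hconf2 (a ≫ v) h4
  have h5 : (c ≫ dX) ≫ m = t ≫ m := by
    rw [Category.assoc, hm, ← Category.assoc, hc, Category.assoc, hv, hab]
  have h6 : (c ≫ dX - t) ≫ m = 0 := by
    rw [Preadditive.sub_comp, h5, sub_self]
  have h7 : c ≫ dX = t := by
    have := hmono _ h6
    rwa [sub_eq_zero] at this
  exact ⟨K₁, hK₁, c, dX, h7.symm⟩

/-- Every map `X ⟶ Z` with `Z ∈ ΣD` factors, modulo `K`, through an object of `ΣD`. -/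
lemma ext_embed (hEI : E.EnoughInj) {Z D' I : B} {e : D' ⟶ I} {p : I ⟶ Z}
    (hconfZ : E.isSES e p) (hD' : D' ∈ D) (hI : I ∈ E.injObjs) {X : B} (f : X ⟶ Z) :
    ∃ (S' : B), S' ∈ E.SigmaSet D ∧ ∃ (x' : X ⟶ S') (h₀ : S' ⟶ Z) (lam : X ⟶ I),
      x' ≫ h₀ - f = lam ≫ p := by
  obtain ⟨W, uW, w, θW, hconfW, hcW, hkW⟩ := E.pullback_defl hconfZ f
  -- `hcW : θW ≫ p = w ≫ f`, `hkW : uW ≫ θW = e`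
  obtain ⟨IW, SWo, ιW, πW, hIW, hconfIW⟩ := hEI W
  obtain ⟨S', q', hconfS⟩ := E.infl_comp uW ιW ⟨X, w, hconfW⟩ ⟨SWo, πW, hconfIW⟩
  have hS' : S' ∈ E.SigmaSet D := ⟨D', IW, uW ≫ ιW, q', hD', hIW, hconfS⟩
  obtain ⟨ρ₂, hρ₂⟩ := hI (uW ≫ ιW) q' hconfS e
  have h0 : (uW ≫ ιW) ≫ ρ₂ ≫ p = 0 := by
    rw [← Category.assoc, hρ₂, E.comp_eq_zero hconfZ]
  obtain ⟨h₀, hh₀, -⟩ := E.is_cokernel hconfS (ρ₂ ≫ p) h0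
  have h1 : uW ≫ ιW ≫ q' = 0 := by
    rw [← Category.assoc, E.comp_eq_zero hconfS]
  obtain ⟨x', hx', -⟩ := E.is_cokernel hconfW (ιW ≫ q') h1
  have h2 : uW ≫ (ιW ≫ ρ₂ - θW) = 0 := by
    rw [Preadditive.comp_sub, ← Category.assoc, hρ₂, hkW, sub_self]
  obtain ⟨lam, hlam, -⟩ := E.is_cokernel hconfW (ιW ≫ ρ₂ - θW) h2
  refine ⟨S', hS', x', h₀, lam, ?_⟩
  apply defl_cancel hconfW
  rw [Preadditive.comp_sub, ← Category.assoc, hx', Category.assoc, hh₀, ← Category.assoc,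
    ← Category.assoc, hlam, Preadditive.sub_comp, hcW]

end Main
end StmtAux

/-- Proposition 3.1: `(ΣD)/I` is the class of enough injectives of the abelian
quotient `B/K`. -/
theorem stmt6 (k : Type*) [Field k] [Linear k B]
    (E : ExactStr B) (hKS : IsKrullSchmidt (B := B)) (hEP : E.EnoughProj) (hEI : E.EnoughInj)
    (C K D : Set B) (hFR : FullyRigid E C K) (hKD : CotorsionPair E K D)
    [Abelian (QuotCat K)] :
    (∀ X ∈ E.SigmaSet D, Injective ((Quotient.functor (quotRel K)).obj X)) ∧
    (∀ X : B, ∃ Y ∈ E.SigmaSet D,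
      ∃ m : (Quotient.functor (quotRel K)).obj X ⟶ (Quotient.functor (quotRel K)).obj Y,
        Mono m) := by
  have cp := hFR.cp
  have hinjK : ∀ ⦃I₀ : B⦄, E.Inj I₀ → I₀ ∈ K := fun I₀ hI₀ => StmtAux.inj_mem_K cp hI₀
  set Q := Quotient.functor (quotRel K) with hQ
  constructor
  · -- every object of `ΣD` is injective in the quotient
    intro Z hZ
    obtain ⟨D', I, e, p, hD', hI, hconfZ⟩ := hZ
    constructor
    intro A A' fz gm hgm
    haveI := hgm
    obtain ⟨X₀⟩ := A
    obtain ⟨Y₀b⟩ := A'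
    obtain ⟨f, rfl⟩ := Q.map_surjective fz
    obtain ⟨g, rfl⟩ := Q.map_surjective gm
    -- factor `f` through an object of `ΣD`, modulo `K`
    obtain ⟨S', hS', x', h₀, lam, hkey⟩ := StmtAux.ext_embed hEI hconfZ hD' hI f
    -- pushout in the abelian quotient category
    haveI : Mono (pushout.inr (Q.map g) (Q.map x')) := inferInstance
    obtain ⟨YP, hYP, mP, hmP⟩ :=
      StmtAux.embed hKD hEI (pushout (Q.map g) (Q.map x')).as
    haveI hQmP : Mono (Q.map mP) := StmtAux.mono_Q_of cp mP (fun t ht => hmP t ht)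
    have hmonoc : Mono (pushout.inr (Q.map g) (Q.map x') ≫ Q.map mP) := mono_comp _ _
    obtain ⟨χ, hχ⟩ := Q.map_surjective (pushout.inr (Q.map g) (Q.map x') ≫ Q.map mP)
    have hχmono : Mono (Q.map χ) := by rw [hχ]; exact hmonoc
    have hχprop : ∀ {T : B} (t : T ⟶ S'), FactorsThru K (t ≫ χ) → FactorsThru K t :=
      fun t ht => StmtAux.factors_of_monoQ cp χ hχmono t ht
    obtain ⟨r, hr⟩ := StmtAux.star hKD hinjK hS' hYP χ hχprop
    have e1 : Q.map (χ ≫ r) = Q.map (𝟙 S') := by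
      rw [StmtAux.hom_eq_iff cp]
      exact hr
    have e2 : Q.map (x' ≫ h₀) = Q.map f := by
      rw [StmtAux.hom_eq_iff cp]
      exact ⟨I, hinjK hI, lam, p, hkey⟩
    refine ⟨pushout.inl (Q.map g) (Q.map x') ≫ Q.map mP ≫ Q.map r ≫ Q.map h₀, ?_⟩
    calc Q.map g ≫ pushout.inl (Q.map g) (Q.map x') ≫ Q.map mP ≫ Q.map r ≫ Q.map h₀
        = (Q.map g ≫ pushout.inl (Q.map g) (Q.map x')) ≫ Q.map mP ≫ Q.map r ≫ Q.map h₀ := by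
          simp only [Category.assoc]
      _ = (Q.map x' ≫ pushout.inr (Q.map g) (Q.map x')) ≫ Q.map mP ≫ Q.map r ≫ Q.map h₀ := by
          rw [pushout.condition]
      _ = Q.map x' ≫ (pushout.inr (Q.map g) (Q.map x') ≫ Q.map mP) ≫ Q.map r ≫ Q.map h₀ := by
          simp only [Category.assoc]
      _ = Q.map x' ≫ Q.map χ ≫ Q.map r ≫ Q.map h₀ := by rw [← hχ]
      _ = Q.map x' ≫ Q.map (χ ≫ r) ≫ Q.map h₀ := by
          rw [Functor.map_comp]; simp only [Category.assoc]
      _ = Q.map x' ≫ Q.map (𝟙 S') ≫ Q.map h₀ := by rw [e1]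
      _ = Q.map (x' ≫ h₀) := by
          rw [← Functor.map_comp, Category.id_comp, ← Functor.map_comp]
      _ = Q.map f := e2
  · -- enough injectives
    intro X
    obtain ⟨Y₀, hY₀, m, hmprop⟩ := StmtAux.embed hKD hEI X
    exact ⟨Y₀, hY₀, Q.map m, StmtAux.mono_Q_of cp m (fun t ht => hmprop t ht)⟩
end

section
/- Let (C, K) be a fully rigid cotorsion pair in an exact category B, and let X ∈ H_K with projective dimension 1 in B. Then X has projective dimension at most 1 in the abelian quotient B/K. -/
open CategoryTheory Limits ZeroObject

universe v u

variable (B : Type u)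

variable {B} [Category.{v} B] [Preadditive B] [HasZeroObject B]
  [HasFiniteBiproducts B] [HasBinaryBiproducts B]

/-! ### Auxiliary machinery for `stmt15` -/

section Stmt15Aux

variable {E : ExactStr B}

/-- Inflations are monomorphic. -/
lemma aux_infl_mono {A M T W : B} {i : A ⟶ M} {d : M ⟶ T} (h : E.isSES i d)
    {u v : W ⟶ A} (huv : u ≫ i = v ≫ i) : u = v := by
  have h0 : (u ≫ i) ≫ d = 0 := by rw [Category.assoc, E.comp_eq_zero h, comp_zero]
  obtain ⟨g, -, hu⟩ := E.is_kernel h (u ≫ i) h0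
  exact (hu u rfl).trans (hu v huv.symm).symm

/-- Deflations are epimorphic. -/
lemma aux_defl_epi {A M T W : B} {i : A ⟶ M} {d : M ⟶ T} (h : E.isSES i d)
    {u v : T ⟶ W} (huv : d ≫ u = d ≫ v) : u = v := by
  have h0 : i ≫ (d ≫ u) = 0 := by rw [← Category.assoc, E.comp_eq_zero h, zero_comp]
  obtain ⟨g, -, hu⟩ := E.is_cokernel h (d ≫ u) h0
  exact (hu u rfl).trans (hu v huv.symm).symm

/-- A section of the deflation yields a retraction of the inflation. -/
lemma aux_retr {A M T : B} {i : A ⟶ M} {d : M ⟶ T} (h : E.isSES i d)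
    {s : T ⟶ M} (hs : s ≫ d = 𝟙 T) : ∃ r : M ⟶ A, i ≫ r = 𝟙 A := by
  have h1 : (𝟙 M - d ≫ s) ≫ d = 0 := by
    simp [Preadditive.sub_comp, Category.assoc, hs]
  obtain ⟨r, hr, -⟩ := E.is_kernel h _ h1
  refine ⟨r, aux_infl_mono h ?_⟩
  rw [Category.assoc, hr]
  simp [Preadditive.comp_sub, reassoc_of% (E.comp_eq_zero h)]

/-- Extension along an inflation, given `Ext¹(T, Z) = 0`. -/
lemma aux_extend {A M T Z : B} {a : A ⟶ M} {b : M ⟶ T} (h : E.isSES a b)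
    (hT : E.Ext1Zero T Z) (f : A ⟶ Z) : ∃ F : M ⟶ Z, a ≫ F = f := by
  obtain ⟨Y, i', d', g, hY, hcm1, -⟩ := E.pushout_infl h f
  obtain ⟨s, hs⟩ := hT i' d' hY
  obtain ⟨r, hr⟩ := aux_retr hY hs
  exact ⟨g ≫ r, by rw [← Category.assoc, hcm1, Category.assoc, hr, Category.comp_id]⟩

/-- Lifting along a deflation, given `Ext¹(S, A) = 0` for the kernel `A`. -/
lemma aux_lift {A M T S : B} {a : A ⟶ M} {b : M ⟶ T} (h : E.isSES a b)
    (hS : E.Ext1Zero S A) (f : S ⟶ T) : ∃ F : S ⟶ M, F ≫ b = f := by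
  obtain ⟨Y, i', d', g, hY, hcm1, -⟩ := E.pullback_defl h f
  obtain ⟨s, hs⟩ := hS i' d' hY
  exact ⟨s ≫ g, by rw [Category.assoc, hcm1, ← Category.assoc, hs, Category.id_comp]⟩

/-- Projective objects have vanishing `Ext¹` against anything. -/
lemma aux_proj_ext1 {T M : B} (hT : E.Proj T) : E.Ext1Zero T M :=
  fun _ i d h => hT i d h (𝟙 T)

/-- Splitting lemma: a conflation with a section of its deflation gives a biproduct
decomposition, and the corresponding split conflations. -/
lemma aux_split {A M T : B} {i : A ⟶ M} {d : M ⟶ T} (h : E.isSES i d)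
    {s : T ⟶ M} (hs : s ≫ d = 𝟙 T) :
    Nonempty (M ≅ A ⊞ T) ∧ E.isSES (biprod.inl : A ⟶ A ⊞ T) (biprod.snd : A ⊞ T ⟶ T)
      ∧ E.isSES (biprod.inr : A ⟶ T ⊞ A) (biprod.fst : T ⊞ A ⟶ T) := by
  have h1 : (𝟙 M - d ≫ s) ≫ d = 0 := by
    simp [Preadditive.sub_comp, Category.assoc, hs]
  obtain ⟨r, hr, -⟩ := E.is_kernel h _ h1
  have hir : i ≫ r = 𝟙 A := by
    apply aux_infl_mono h
    rw [Category.assoc, hr]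
    simp [Preadditive.comp_sub, reassoc_of% (E.comp_eq_zero h)]
  have hsr : s ≫ r = 0 := by
    apply aux_infl_mono h
    rw [Category.assoc, hr, zero_comp]
    simp [Preadditive.comp_sub, reassoc_of% hs]
  have hid : i ≫ d = 0 := E.comp_eq_zero h
  -- first iso : M ≅ A ⊞ T
  have hφψ : biprod.lift r d ≫ biprod.desc i s = 𝟙 M := by
    rw [biprod.lift_desc, hr]
    abel
  have hψφ : biprod.desc i s ≫ biprod.lift r d = 𝟙 (A ⊞ T) := by
    apply biprod.hom_ext' <;> apply biprod.hom_ext <;>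
      simp [hir, hid, hsr, hs, reassoc_of% hir, reassoc_of% hid,
        reassoc_of% hsr, reassoc_of% hs]
  refine ⟨⟨⟨biprod.lift r d, biprod.desc i s, hφψ, hψφ⟩⟩, ?_, ?_⟩
  · have := E.iso_closed (Iso.refl A)
      (Iso.symm ⟨biprod.lift r d, biprod.desc i s, hφψ, hψφ⟩) (Iso.refl T) h
    simp only [Iso.refl_hom, Iso.symm_hom, Iso.symm_inv, Category.id_comp, Iso.refl_inv,
      Category.comp_id] at this
    have e1 : i ≫ biprod.lift r d = biprod.inl := by
      apply biprod.hom_ext <;> simp [hir, hid, reassoc_of% hir, reassoc_of% hid]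
    have e2 : biprod.desc i s ≫ d = biprod.snd := by
      apply biprod.hom_ext' <;> simp [hid, hs]
    rwa [e1, e2] at this
  · -- second : M ≅ T ⊞ A
    have hφψ' : biprod.lift d r ≫ biprod.desc s i = 𝟙 M := by
      rw [biprod.lift_desc, hr]
      abel
    have hψφ' : biprod.desc s i ≫ biprod.lift d r = 𝟙 (T ⊞ A) := by
      apply biprod.hom_ext' <;> apply biprod.hom_ext <;>
        simp [hir, hid, hsr, hs, reassoc_of% hir, reassoc_of% hid,
          reassoc_of% hsr, reassoc_of% hs]
    have := E.iso_closed (Iso.refl A)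
      (Iso.symm ⟨biprod.lift d r, biprod.desc s i, hφψ', hψφ'⟩) (Iso.refl T) h
    simp only [Iso.refl_hom, Iso.symm_hom, Iso.symm_inv, Category.id_comp, Iso.refl_inv,
      Category.comp_id] at this
    have e1 : i ≫ biprod.lift d r = biprod.inr := by
      apply biprod.hom_ext <;> simp [hir, hid, reassoc_of% hir, reassoc_of% hid]
    have e2 : biprod.desc s i ≫ d = biprod.fst := by
      apply biprod.hom_ext' <;> simp [hid, hs]
    rwa [e1, e2] at this

/-- Every projective object belongs to the left class of the cotorsion pair. -/
lemma aux_proj_mem_C {C K : Set B} (cp : CotorsionPair E C K) {P : B} (hP : E.Proj P) :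
    P ∈ C := by
  obtain ⟨V, U, iV, dP, hU, hV, hses⟩ := cp.resolve P
  obtain ⟨s, hs⟩ := hP iV dP hses (𝟙 P)
  obtain ⟨⟨e⟩, -, -⟩ := aux_split hses hs
  exact cp.summandClosed_left P U hU ⟨V, ⟨e.trans (biprod.braiding V P)⟩⟩

/-- Rigidity forces `C ⊆ K`. -/
lemma aux_C_subset_K {C K : Set B} (cp : CotorsionPair E C K)
    (rigid : ∀ ⦃X : B⦄, X ∈ C → ∀ ⦃Y : B⦄, Y ∈ C → E.Ext1Zero X Y)
    {Z : B} (hZ : Z ∈ C) : Z ∈ K := by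
  obtain ⟨V, U, κ, μ, hU, hV, hses⟩ := cp.coresolve Z
  obtain ⟨s, hs⟩ := rigid hU hZ κ μ hses
  obtain ⟨⟨e⟩, -, -⟩ := aux_split hses hs
  exact cp.summandClosed_right Z V hV ⟨U, ⟨e⟩⟩

/-- The split conflation `A ↣ A ⊞ T ↠ T`. -/
lemma aux_ses_inl (E : ExactStr B) (A T : B) :
    E.isSES (biprod.inl : A ⟶ A ⊞ T) (biprod.snd : A ⊞ T ⟶ T) := by
  obtain ⟨Y, i', d', g, hY, -, hig⟩ := E.pullback_defl (E.id_isSES A) (0 : T ⟶ 0)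
  have h0 : i' ≫ (𝟙 Y - g ≫ i') = 0 := by
    simp [Preadditive.comp_sub, reassoc_of% hig]
  obtain ⟨σ, hσ, -⟩ := E.is_cokernel hY _ h0
  have hσd : σ ≫ d' = 𝟙 T := by
    apply aux_defl_epi hY
    rw [← Category.assoc, hσ]
    simp [Preadditive.sub_comp, Category.assoc, reassoc_of% (E.comp_eq_zero hY),
      E.comp_eq_zero hY]
  exact (aux_split hY hσd).2.1

/-- The split conflation `T ↣ A ⊞ T ↠ A`. -/
lemma aux_ses_inr (E : ExactStr B) (A T : B) :
    E.isSES (biprod.inr : T ⟶ A ⊞ T) (biprod.fst : A ⊞ T ⟶ A) := by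
  obtain ⟨Y, i', d', g, hY, -, hig⟩ := E.pullback_defl (E.id_isSES T) (0 : A ⟶ 0)
  have h0 : i' ≫ (𝟙 Y - g ≫ i') = 0 := by
    simp [Preadditive.comp_sub, reassoc_of% hig]
  obtain ⟨σ, hσ, -⟩ := E.is_cokernel hY _ h0
  have hσd : σ ≫ d' = 𝟙 A := by
    apply aux_defl_epi hY
    rw [← Category.assoc, hσ]
    simp [Preadditive.sub_comp, Category.assoc, reassoc_of% (E.comp_eq_zero hY),
      E.comp_eq_zero hY]
  exact (aux_split hY hσd).2.2

/-- Replacing the kernel of a conflation by any other kernel. -/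
lemma aux_kernel_replace {W M T A2 : B} {i : W ⟶ M} {d : M ⟶ T} (h : E.isSES i d)
    {j : A2 ⟶ M} (hj0 : j ≫ d = 0)
    (huniv : ∀ {S : B} (t : S ⟶ M), t ≫ d = 0 → ∃! s : S ⟶ A2, s ≫ j = t) :
    E.isSES j d := by
  have hjmono : ∀ {S : B} (u v : S ⟶ A2), u ≫ j = v ≫ j → u = v := by
    intro S u v huv
    have h0 : (u ≫ j) ≫ d = 0 := by rw [Category.assoc, hj0, comp_zero]
    obtain ⟨s, -, hs⟩ := huniv (u ≫ j) h0
    exact (hs u rfl).trans (hs v huv.symm).symm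
  obtain ⟨β, hβ, -⟩ := E.is_kernel h j hj0
  obtain ⟨α, hα, -⟩ := huniv i (E.comp_eq_zero h)
  have hβα : β ≫ α = 𝟙 A2 := by
    apply hjmono
    rw [Category.assoc, hα, hβ, Category.id_comp]
  have hαβ : α ≫ β = 𝟙 W := by
    apply aux_infl_mono h
    rw [Category.assoc, hβ, hα, Category.id_comp]
  have := E.iso_closed (⟨β, α, hβα, hαβ⟩ : A2 ≅ W) (Iso.refl M) (Iso.refl T) h
  simp only [Iso.refl_inv, Iso.refl_hom, Category.comp_id, Category.id_comp] at this
  rwa [hβ] at this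

/-- "Fact G": if `κ : A ⟶ V` is an inflation, then for any `f : A ⟶ Bc` the morphism
`biprod.lift κ f : A ⟶ V ⊞ Bc` is an inflation. -/
lemma aux_factG {A V U Bc : B} {κ : A ⟶ V} {μ : V ⟶ U} (hκ : E.isSES κ μ) (f : A ⟶ Bc) :
    ∃ (N : B) (D : V ⊞ Bc ⟶ N), E.isSES (biprod.lift κ f) D := by
  -- step 1 : `biprod.lift (𝟙 A) f` is an inflation
  have step1 : ∃ (N₁ : B) (D₁ : A ⊞ Bc ⟶ N₁), E.isSES (biprod.lift (𝟙 A) f) D₁ := by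
    have h0 := aux_ses_inl E A Bc
    have hΦ : (biprod.lift biprod.fst (biprod.fst ≫ f + biprod.snd) : A ⊞ Bc ⟶ A ⊞ Bc) ≫
        biprod.lift biprod.fst (biprod.snd - biprod.fst ≫ f) = 𝟙 (A ⊞ Bc) := by
      apply biprod.hom_ext <;>
        simp [Preadditive.comp_add, Preadditive.comp_sub, Category.assoc]
    have hΦ' : (biprod.lift biprod.fst (biprod.snd - biprod.fst ≫ f) : A ⊞ Bc ⟶ A ⊞ Bc) ≫
        biprod.lift biprod.fst (biprod.fst ≫ f + biprod.snd) = 𝟙 (A ⊞ Bc) := by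
      apply biprod.hom_ext <;>
        simp [Preadditive.comp_add, Preadditive.comp_sub, Category.assoc]
    have := E.iso_closed (Iso.refl A)
      (⟨biprod.lift biprod.fst (biprod.snd - biprod.fst ≫ f),
        biprod.lift biprod.fst (biprod.fst ≫ f + biprod.snd), hΦ', hΦ⟩ :
          (A ⊞ Bc) ≅ (A ⊞ Bc)) (Iso.refl Bc) h0
    simp only [Iso.refl_hom, Iso.refl_inv, Category.id_comp, Category.comp_id] at this
    have e1 : (biprod.inl : A ⟶ A ⊞ Bc) ≫
        biprod.lift biprod.fst (biprod.fst ≫ f + biprod.snd) = biprod.lift (𝟙 A) f := by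
      apply biprod.hom_ext <;> simp
    rw [e1] at this
    exact ⟨Bc, _, this⟩
  -- step 2 : `biprod.map κ (𝟙 Bc)` is an inflation with deflation `fst ≫ μ`
  have step2 : E.isSES (biprod.map κ (𝟙 Bc)) ((biprod.fst : V ⊞ Bc ⟶ V) ≫ μ) := by
    obtain ⟨W'', i'', hses''⟩ := E.defl_comp (biprod.fst : V ⊞ Bc ⟶ V) μ
      ⟨Bc, biprod.inr, aux_ses_inr E V Bc⟩ ⟨A, κ, hκ⟩
    refine aux_kernel_replace hses'' ?_ ?_
    · rw [← Category.assoc, biprod.map_fst, Category.assoc, E.comp_eq_zero hκ, comp_zero]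
    · intro S t ht
      rw [← Category.assoc] at ht
      obtain ⟨s₁, hs₁, huniq₁⟩ := E.is_kernel hκ (t ≫ biprod.fst) ht
      refine ⟨biprod.lift s₁ (t ≫ biprod.snd), ?_, ?_⟩
      · apply biprod.hom_ext
        · rw [Category.assoc, biprod.map_fst, ← Category.assoc, biprod.lift_fst, hs₁]
        · rw [Category.assoc, biprod.map_snd, ← Category.assoc, biprod.lift_snd,
            Category.comp_id]
      · intro s' hs'
        apply biprod.hom_ext
        · rw [biprod.lift_fst]
          apply huniq₁
          rw [← hs']
          simp [biprod.map_fst]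
        · rw [biprod.lift_snd, ← hs']
          simp [biprod.map_snd]
  -- combine
  obtain ⟨N₁, D₁, h1⟩ := step1
  obtain ⟨N, D, hND⟩ := E.infl_comp (biprod.lift (𝟙 A) f) (biprod.map κ (𝟙 Bc))
    ⟨N₁, D₁, h1⟩ ⟨U, _, step2⟩
  have e : biprod.lift (𝟙 A) f ≫ biprod.map κ (𝟙 Bc) = biprod.lift κ f := by
    apply biprod.hom_ext
    · rw [Category.assoc, biprod.map_fst, ← Category.assoc, biprod.lift_fst, biprod.lift_fst,
        Category.id_comp]
    · rw [Category.assoc, biprod.map_snd, ← Category.assoc, biprod.lift_snd, biprod.lift_snd,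
        Category.comp_id]
  rw [e] at hND
  exact ⟨N, D, hND⟩

/-- The ideal of morphisms generated by identities of objects of `K`. -/
inductive KIdeal (K : Set B) {A Bc : B} : (A ⟶ Bc) → Prop
  | of {Z : B} (hZ : Z ∈ K) (g : A ⟶ Z) (h : Z ⟶ Bc) : KIdeal K (g ≫ h)
  | zero : KIdeal K (0 : A ⟶ Bc)
  | add {f g : A ⟶ Bc} : KIdeal K f → KIdeal K g → KIdeal K (f + g)

lemma KIdeal.neg {K : Set B} {A Bc : B} {f : A ⟶ Bc} (h : KIdeal K f) : KIdeal K (-f) := by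
  induction h with
  | of hZ g h => rw [← Preadditive.neg_comp]; exact KIdeal.of hZ _ _
  | zero => simpa using KIdeal.zero
  | add h1 h2 ih1 ih2 => rw [neg_add]; exact ih1.add ih2

lemma KIdeal.sub {K : Set B} {A Bc : B} {f g : A ⟶ Bc} (h1 : KIdeal K f) (h2 : KIdeal K g) :
    KIdeal K (f - g) := by
  rw [sub_eq_add_neg]; exact h1.add h2.neg

lemma KIdeal.precomp {K : Set B} {A' A Bc : B} (u : A' ⟶ A) {f : A ⟶ Bc} (h : KIdeal K f) :
    KIdeal K (u ≫ f) := by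
  induction h with
  | of hZ g h => rw [← Category.assoc]; exact KIdeal.of hZ _ _
  | zero => simpa using KIdeal.zero
  | add h1 h2 ih1 ih2 => rw [Preadditive.comp_add]; exact ih1.add ih2

lemma KIdeal.postcomp {K : Set B} {A Bc Bc' : B} (u : Bc ⟶ Bc') {f : A ⟶ Bc}
    (h : KIdeal K f) : KIdeal K (f ≫ u) := by
  induction h with
  | of hZ g h => rw [Category.assoc]; exact KIdeal.of hZ _ _
  | zero => simpa using KIdeal.zero
  | add h1 h2 ih1 ih2 => rw [Preadditive.add_comp]; exact ih1.add ih2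

lemma aux_quot_add_kideal {K : Set B} {A Bc : B} {h : A ⟶ Bc} (hh : KIdeal K h)
    (g : A ⟶ Bc) :
    (Quotient.functor (quotRel K)).map (g + h) = (Quotient.functor (quotRel K)).map g := by
  induction hh generalizing g with
  | of hZ a b =>
      exact CategoryTheory.Quotient.sound _ ⟨_, hZ, a, b, by abel⟩
  | zero => rw [add_zero]
  | add h1 h2 ih1 ih2 =>
      rw [← add_assoc, ih2, ih1]

lemma aux_quot_eq_of_kideal {K : Set B} {A Bc : B} {f g : A ⟶ Bc} (h : KIdeal K (f - g)) :
    (Quotient.functor (quotRel K)).map f = (Quotient.functor (quotRel K)).map g := by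
  have := aux_quot_add_kideal h g
  rwa [add_sub_cancel] at this

lemma aux_kideal_of_quot_eq {K : Set B} {A Bc : B} {f g : A ⟶ Bc}
    (h : (Quotient.functor (quotRel K)).map f = (Quotient.functor (quotRel K)).map g) :
    KIdeal K (f - g) := by
  have h'' : Quot.mk (@HomRel.CompClosure B _ (quotRel K) A Bc) f =
      Quot.mk (@HomRel.CompClosure B _ (quotRel K) A Bc) g := h
  have h' : Relation.EqvGen (@HomRel.CompClosure B _ (quotRel K) A Bc) f g :=
    Quot.eq.mp h''
  clear h h''
  induction h' with
  | rel x y hxy =>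
      obtain ⟨_, _, u, m₁, m₂, v, hrel⟩ := hxy
      obtain ⟨Z, hZ, a, b, hab⟩ := hrel
      have e : u ≫ m₁ ≫ v - u ≫ m₂ ≫ v = (u ≫ a) ≫ (b ≫ v) := by
        rw [← Preadditive.comp_sub, ← Preadditive.sub_comp, hab]
        simp [Category.assoc]
      rw [e]
      exact KIdeal.of hZ _ _
  | refl x => simpa using KIdeal.zero
  | symm x y _ ih => simpa [neg_sub] using ih.neg
  | trans x y z _ _ ih1 ih2 => simpa using ih1.add ih2

/-- Image of the zero object is a zero object in the quotient. -/
lemma aux_isZero_pi_zero {K : Set B} :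
    IsZero ((Quotient.functor (quotRel K)).obj (0 : B)) := by
  constructor
  · intro Y
    refine ⟨⟨⟨(Quotient.functor (quotRel K)).map 0⟩, ?_⟩⟩
    intro a
    obtain ⟨a₀, rfl⟩ := (Quotient.functor (quotRel K)).map_surjective
      (show (Quotient.functor (quotRel K)).obj (0 : B) ⟶
        (Quotient.functor (quotRel K)).obj Y.as from a)
    exact congrArg _ ((isZero_zero B).eq_of_src a₀ 0)
  · intro Y
    refine ⟨⟨⟨(Quotient.functor (quotRel K)).map 0⟩, ?_⟩⟩
    intro a
    obtain ⟨a₀, rfl⟩ := (Quotient.functor (quotRel K)).map_surjective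
      (show (Quotient.functor (quotRel K)).obj Y.as ⟶
        (Quotient.functor (quotRel K)).obj (0 : B) from a)
    exact congrArg _ ((isZero_zero B).eq_of_tgt a₀ 0)

lemma aux_pi_map_zero {K : Set B} [Abelian (QuotCat K)] {A Bc : B} :
    (Quotient.functor (quotRel K)).map (0 : A ⟶ Bc) = 0 := by
  have e : (0 : A ⟶ Bc) = (0 : A ⟶ (0 : B)) ≫ (0 : (0 : B) ⟶ Bc) := by simp
  rw [e, Functor.map_comp]
  have hz : (Quotient.functor (quotRel K)).map (0 : (0 : B) ⟶ Bc) = 0 :=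
    (aux_isZero_pi_zero (K := K)).eq_zero_of_src _
  rw [hz, comp_zero]

lemma aux_pi_kideal_eq_zero {K : Set B} [Abelian (QuotCat K)] {A Bc : B} {f : A ⟶ Bc}
    (h : KIdeal K f) : (Quotient.functor (quotRel K)).map f = 0 := by
  have h' : KIdeal K (f - 0) := by simpa using h
  rw [aux_quot_eq_of_kideal h', aux_pi_map_zero]

end Stmt15Aux

/-- Lemma 5.1: if `X ∈ H_K` has projective dimension `1` in `B`, then
`pd_{B/K} X ≤ 1`. -/
theorem stmt15 (k : Type*) [Field k] [Linear k B]
    (E : ExactStr B) (hKS : IsKrullSchmidt (B := B)) (hEP : E.EnoughProj) (hEI : E.EnoughInj)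
    (C K : Set B) (hFR : FullyRigid E C K) [Abelian (QuotCat K)]
    (X : B) (hX : X ∈ E.CoCone C C) (hXK : NoSummandIn K X)
    (hpd1 : E.pdLE 1 X) (hpd0 : ¬ E.pdLE 0 X) :
    pdLEQ 1 ((Quotient.functor (quotRel K)).obj X) := by
  classical
  obtain ⟨C0, C1, x, y, hC0, hC1, hxy⟩ := hX
  obtain ⟨P1, P0, iP, d, hP0proj, hsesP, hP1pd⟩ := hpd1
  have hP1proj : E.Proj P1 := hP1pd
  obtain ⟨Q0, W0, ι0, p0, hQ0proj, hses0⟩ := hEP C0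
  obtain ⟨Q1, W1, ι1, p1, hQ1proj, hses1⟩ := hEP C1
  -- memberships
  have hCK : ∀ {Z : B}, Z ∈ C → Z ∈ K := fun hZ => aux_C_subset_K hFR.cp hFR.rigid hZ
  have hPK : ∀ {P : B}, E.Proj P → P ∈ K := fun hP => hCK (aux_proj_mem_C hFR.cp hP)
  have hQ0K : Q0 ∈ K := hPK hQ0proj
  have hQ1K : Q1 ∈ K := hPK hQ1proj
  have hP1K : P1 ∈ K := hPK hP1proj
  have hC0K : C0 ∈ K := hCK hC0
  -- the comparison maps
  obtain ⟨m, hm⟩ := hQ0proj ι1 p1 hses1 (p0 ≫ y)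
  have hΩy0 : (ι0 ≫ m) ≫ p1 = 0 := by
    rw [Category.assoc, hm, ← Category.assoc, E.comp_eq_zero hses0, zero_comp]
  obtain ⟨Ωy, hΩy, -⟩ := E.is_kernel hses1 (ι0 ≫ m) hΩy0
  obtain ⟨l, hl⟩ := hQ1proj x y hxy p1
  have hθ0 : (ι1 ≫ l) ≫ y = 0 := by
    rw [Category.assoc, hl, E.comp_eq_zero hses1]
  obtain ⟨θ, hθ, -⟩ := E.is_kernel hxy (ι1 ≫ l) hθ0
  -- extension of K-ideal maps along distinguished inflations
  have tool1 : ∀ {A V U M : B} {a : A ⟶ V} {b : V ⟶ U}, E.isSES a b → U ∈ C →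
      ∀ {f : A ⟶ M}, KIdeal K f → ∃ h : V ⟶ M, a ≫ h = f := by
    intro A V U M a b hab hU f hf
    induction hf with
    | of hZ g h =>
        obtain ⟨g', hg'⟩ := aux_extend hab (hFR.cp.ext hU hZ) g
        exact ⟨g' ≫ h, by rw [← Category.assoc, hg']⟩
    | zero => exact ⟨0, comp_zero⟩
    | add h1 h2 ih1 ih2 =>
        obtain ⟨e1, he1⟩ := ih1
        obtain ⟨e2, he2⟩ := ih2
        exact ⟨e1 + e2, by rw [Preadditive.comp_add, he1, he2]⟩
  -- (w) : `Ωy ≫ θ` lies in the ideal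
  have hKw : KIdeal K (Ωy ≫ θ) := by
    have hv : (m ≫ l - p0) ≫ y = 0 := by
      rw [Preadditive.sub_comp, Category.assoc, hl, hm, sub_self]
    obtain ⟨e, he, -⟩ := E.is_kernel hxy _ hv
    have hIw : Ωy ≫ θ = ι0 ≫ e := by
      apply aux_infl_mono hxy
      calc (Ωy ≫ θ) ≫ x = Ωy ≫ (θ ≫ x) := Category.assoc _ _ _
        _ = Ωy ≫ (ι1 ≫ l) := by rw [hθ]
        _ = (Ωy ≫ ι1) ≫ l := (Category.assoc _ _ _).symm
        _ = (ι0 ≫ m) ≫ l := by rw [hΩy]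
        _ = ι0 ≫ (m ≫ l) - 0 := by rw [sub_zero, Category.assoc]
        _ = ι0 ≫ (m ≫ l) - (ι0 ≫ p0) := by rw [E.comp_eq_zero hses0]
        _ = ι0 ≫ (m ≫ l - p0) := by rw [Preadditive.comp_sub]
        _ = ι0 ≫ (e ≫ x) := by rw [he]
        _ = (ι0 ≫ e) ≫ x := (Category.assoc _ _ _).symm
    rw [hIw]
    exact KIdeal.of hQ0K ι0 e
  -- (epi) : cancellation property of `θ`
  have hepiθ : ∀ {M : B} (u : X ⟶ M), KIdeal K (θ ≫ u) → KIdeal K u := by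
    intro M u hu
    obtain ⟨h, hh⟩ := tool1 hses1 hC1 hu
    obtain ⟨Y, i', d', g, hY, hcm1, hcm2⟩ := E.pushout_infl hxy u
    have hσ0 : ι1 ≫ (l ≫ g - h ≫ i') = 0 := by
      calc ι1 ≫ (l ≫ g - h ≫ i')
          = (ι1 ≫ l) ≫ g - (ι1 ≫ h) ≫ i' := by
            simp [Preadditive.comp_sub, Category.assoc]
        _ = (θ ≫ x) ≫ g - (θ ≫ u) ≫ i' := by rw [← hθ, hh]
        _ = θ ≫ (x ≫ g) - θ ≫ (u ≫ i') := by rw [Category.assoc, Category.assoc]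
        _ = 0 := by rw [hcm1, sub_self]
    obtain ⟨s, hs, -⟩ := E.is_cokernel hses1 _ hσ0
    have hsd : s ≫ d' = 𝟙 C1 := by
      apply aux_defl_epi hses1
      calc p1 ≫ s ≫ d' = (p1 ≫ s) ≫ d' := (Category.assoc _ _ _).symm
        _ = (l ≫ g - h ≫ i') ≫ d' := by rw [hs]
        _ = l ≫ (g ≫ d') - h ≫ (i' ≫ d') := by
            simp [Preadditive.sub_comp, Category.assoc]
        _ = l ≫ y - h ≫ 0 := by rw [hcm2, E.comp_eq_zero hY]
        _ = p1 ≫ 𝟙 C1 := by rw [hl, comp_zero, sub_zero, Category.comp_id]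
    obtain ⟨r, hr⟩ := aux_retr hY hsd
    have hu2 : u = x ≫ (g ≫ r) := by
      calc u = u ≫ 𝟙 M := (Category.comp_id u).symm
        _ = u ≫ (i' ≫ r) := by rw [hr]
        _ = (u ≫ i') ≫ r := (Category.assoc _ _ _).symm
        _ = (x ≫ g) ≫ r := by rw [← hcm1]
        _ = x ≫ (g ≫ r) := Category.assoc _ _ _
    rw [hu2]
    exact KIdeal.of hC0K x (g ≫ r)
  -- (mono) : cancellation property of `Ωy`
  have hmonoΩ : ∀ {W : B} (v : W ⟶ W0), KIdeal K (v ≫ Ωy) → KIdeal K v := by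
    intro W v hv
    obtain ⟨Vw, Uw, κ, μ, hUw, hVw, hκμ⟩ := hFR.cp.coresolve W
    obtain ⟨Bv, hBv⟩ := tool1 hκμ hUw hv
    obtain ⟨T, hT⟩ := aux_extend hκμ (hFR.cp.ext hUw hQ0K) (v ≫ ι0)
    have h1 : κ ≫ (T ≫ p0) = 0 := by
      calc κ ≫ (T ≫ p0) = (κ ≫ T) ≫ p0 := (Category.assoc _ _ _).symm
        _ = (v ≫ ι0) ≫ p0 := by rw [hT]
        _ = v ≫ (ι0 ≫ p0) := Category.assoc _ _ _
        _ = 0 := by rw [E.comp_eq_zero hses0, comp_zero]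
    obtain ⟨φ, hφ, -⟩ := E.is_cokernel hκμ _ h1
    have h2 : κ ≫ (T ≫ m - Bv ≫ ι1) = 0 := by
      calc κ ≫ (T ≫ m - Bv ≫ ι1)
          = (κ ≫ T) ≫ m - (κ ≫ Bv) ≫ ι1 := by
            simp [Preadditive.comp_sub, Category.assoc]
        _ = (v ≫ ι0) ≫ m - (v ≫ Ωy) ≫ ι1 := by rw [hT, hBv]
        _ = v ≫ (ι0 ≫ m) - v ≫ (Ωy ≫ ι1) := by rw [Category.assoc, Category.assoc]
        _ = 0 := by rw [hΩy, sub_self]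
    obtain ⟨ψ, hψ, -⟩ := E.is_cokernel hκμ _ h2
    have h3 : ψ ≫ p1 = φ ≫ y := by
      apply aux_defl_epi hκμ
      calc μ ≫ ψ ≫ p1 = (μ ≫ ψ) ≫ p1 := (Category.assoc _ _ _).symm
        _ = (T ≫ m - Bv ≫ ι1) ≫ p1 := by rw [hψ]
        _ = T ≫ (m ≫ p1) - Bv ≫ (ι1 ≫ p1) := by
            simp [Preadditive.sub_comp, Category.assoc]
        _ = T ≫ (p0 ≫ y) - Bv ≫ 0 := by rw [hm, E.comp_eq_zero hses1]
        _ = (T ≫ p0) ≫ y := by rw [comp_zero, sub_zero, Category.assoc]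
        _ = (μ ≫ φ) ≫ y := by rw [hφ]
        _ = μ ≫ φ ≫ y := Category.assoc _ _ _
    have h4 : (φ - ψ ≫ l) ≫ y = 0 := by
      calc (φ - ψ ≫ l) ≫ y = φ ≫ y - ψ ≫ (l ≫ y) := by
            simp [Preadditive.sub_comp, Category.assoc]
        _ = φ ≫ y - ψ ≫ p1 := by rw [hl]
        _ = 0 := by rw [h3, sub_self]
    obtain ⟨χ, hχ, -⟩ := E.is_kernel hxy _ h4
    obtain ⟨c, hc⟩ := aux_lift hsesP (hFR.cp.ext hUw hP1K) χ
    obtain ⟨j, hj⟩ := hP0proj ι0 p0 hses0 (d ≫ x)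
    obtain ⟨l2, hl2⟩ := hQ1proj ι0 p0 hses0 l
    have h5 : (T - μ ≫ (ψ ≫ l2 + c ≫ j)) ≫ p0 = 0 := by
      have e1 : (ψ ≫ l2 + c ≫ j) ≫ p0 = ψ ≫ l + χ ≫ x := by
        calc (ψ ≫ l2 + c ≫ j) ≫ p0
            = ψ ≫ (l2 ≫ p0) + c ≫ (j ≫ p0) := by
              simp [Preadditive.add_comp, Category.assoc]
          _ = ψ ≫ l + c ≫ (d ≫ x) := by rw [hl2, hj]
          _ = ψ ≫ l + (c ≫ d) ≫ x := by rw [Category.assoc]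
          _ = ψ ≫ l + χ ≫ x := by rw [hc]
      calc (T - μ ≫ (ψ ≫ l2 + c ≫ j)) ≫ p0
          = T ≫ p0 - μ ≫ ((ψ ≫ l2 + c ≫ j) ≫ p0) := by
            simp [Preadditive.sub_comp, Category.assoc]
        _ = T ≫ p0 - μ ≫ (ψ ≫ l + χ ≫ x) := by rw [e1]
        _ = T ≫ p0 - μ ≫ (ψ ≫ l + (φ - ψ ≫ l)) := by rw [hχ]
        _ = T ≫ p0 - μ ≫ φ := by rw [add_sub_cancel]
        _ = 0 := by rw [hφ, sub_self]
    obtain ⟨e, he, -⟩ := E.is_kernel hses0 _ h5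
    have h6 : κ ≫ e = v := by
      apply aux_infl_mono hses0
      calc (κ ≫ e) ≫ ι0 = κ ≫ (e ≫ ι0) := Category.assoc _ _ _
        _ = κ ≫ (T - μ ≫ (ψ ≫ l2 + c ≫ j)) := by rw [he]
        _ = κ ≫ T - (κ ≫ μ) ≫ (ψ ≫ l2 + c ≫ j) := by
            simp [Preadditive.comp_sub, Category.assoc]
        _ = κ ≫ T - 0 := by rw [E.comp_eq_zero hκμ, zero_comp]
        _ = v ≫ ι0 := by rw [sub_zero, hT]
    rw [← h6]
    exact KIdeal.of hVw κ e
  -- (coker) : `θ` is a cokernel of `Ωy` modulo the ideal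
  have hcoker : ∀ {M : B} (f : W1 ⟶ M), KIdeal K (Ωy ≫ f) →
      ∃ u : X ⟶ M, KIdeal K (θ ≫ u - f) := by
    intro M f hf
    obtain ⟨h, hh⟩ := tool1 hses0 hC0 hf
    obtain ⟨Y, i', d', g1, hY, hcm1, hcm2⟩ := E.pushout_infl hses1 f
    have hτ : ι0 ≫ (m ≫ g1 - h ≫ i') = 0 := by
      calc ι0 ≫ (m ≫ g1 - h ≫ i')
          = (ι0 ≫ m) ≫ g1 - (ι0 ≫ h) ≫ i' := by
            simp [Preadditive.comp_sub, Category.assoc]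
        _ = (Ωy ≫ ι1) ≫ g1 - (Ωy ≫ f) ≫ i' := by rw [hΩy, hh]
        _ = Ωy ≫ (ι1 ≫ g1) - Ωy ≫ (f ≫ i') := by rw [Category.assoc, Category.assoc]
        _ = 0 := by rw [hcm1, sub_self]
    obtain ⟨ρ, hρ, -⟩ := E.is_cokernel hses0 _ hτ
    have hρd : ρ ≫ d' = y := by
      apply aux_defl_epi hses0
      calc p0 ≫ ρ ≫ d' = (p0 ≫ ρ) ≫ d' := (Category.assoc _ _ _).symm
        _ = (m ≫ g1 - h ≫ i') ≫ d' := by rw [hρ]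
        _ = m ≫ (g1 ≫ d') - h ≫ (i' ≫ d') := by
            simp [Preadditive.sub_comp, Category.assoc]
        _ = m ≫ p1 - h ≫ 0 := by rw [hcm2, E.comp_eq_zero hY]
        _ = p0 ≫ y := by rw [comp_zero, sub_zero, hm]
    have hxρ : (x ≫ ρ) ≫ d' = 0 := by
      rw [Category.assoc, hρd, E.comp_eq_zero hxy]
    obtain ⟨u, hu, -⟩ := E.is_kernel hY _ hxρ
    have hk0 : (l ≫ ρ - g1) ≫ d' = 0 := by
      calc (l ≫ ρ - g1) ≫ d' = l ≫ (ρ ≫ d') - g1 ≫ d' := by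
            simp [Preadditive.sub_comp, Category.assoc]
        _ = l ≫ y - p1 := by rw [hρd, hcm2]
        _ = 0 := by rw [hl, sub_self]
    obtain ⟨kk, hkk, -⟩ := E.is_kernel hY _ hk0
    have hfin : ι1 ≫ kk = θ ≫ u - f := by
      apply aux_infl_mono hY
      calc (ι1 ≫ kk) ≫ i' = ι1 ≫ (kk ≫ i') := Category.assoc _ _ _
        _ = ι1 ≫ (l ≫ ρ - g1) := by rw [hkk]
        _ = (ι1 ≫ l) ≫ ρ - ι1 ≫ g1 := by
            simp [Preadditive.comp_sub, Category.assoc]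
        _ = (θ ≫ x) ≫ ρ - f ≫ i' := by rw [← hθ, hcm1]
        _ = θ ≫ (x ≫ ρ) - f ≫ i' := by rw [Category.assoc]
        _ = θ ≫ (u ≫ i') - f ≫ i' := by rw [hu]
        _ = (θ ≫ u - f) ≫ i' := by
            simp [Preadditive.sub_comp, Category.assoc]
    refine ⟨u, ?_⟩
    rw [← hfin]
    exact KIdeal.of hQ1K ι1 kk
  -- (proj) : images of `ΩC`-objects are projective in the quotient
  have hproj : ∀ {W Q U : B} (ι : W ⟶ Q) (p : Q ⟶ U), E.Proj Q → U ∈ C → E.isSES ι p →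
      Projective ((Quotient.functor (quotRel K)).obj W) := by
    intro W Q U ι p hQ hU hses
    have hQK : Q ∈ K := hPK hQ
    constructor
    intro Ec Xc fq eq hepi
    obtain ⟨Ea⟩ := Ec
    obtain ⟨Xa⟩ := Xc
    obtain ⟨e0, he0⟩ := (Quotient.functor (quotRel K)).map_surjective eq
    obtain ⟨f0, hf0⟩ := (Quotient.functor (quotRel K)).map_surjective fq
    obtain ⟨Va, Ua, κ, μ, hUa, hVa, hκμ⟩ := hFR.cp.coresolve Ea
    obtain ⟨N, D, hD⟩ := aux_factG hκμ e0
    have hlift : biprod.lift κ e0 = κ ≫ biprod.inl + e0 ≫ biprod.inr := by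
      apply biprod.hom_ext <;> simp
    have hkey : KIdeal K (e0 ≫ (biprod.inr ≫ D)) := by
      have h1 : e0 ≫ (biprod.inr ≫ D) = -(κ ≫ (biprod.inl ≫ D)) := by
        have h2 : (κ ≫ biprod.inl + e0 ≫ biprod.inr) ≫ D = 0 := by
          rw [← hlift]; exact E.comp_eq_zero hD
        have h3 : κ ≫ (biprod.inl ≫ D) + e0 ≫ (biprod.inr ≫ D) = 0 := by
          rw [← Category.assoc, ← Category.assoc, ← Preadditive.add_comp]
          exact h2
        rw [eq_neg_iff_add_eq_zero, add_comm]
        exact h3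
      rw [h1]
      exact (KIdeal.of hVa κ (biprod.inl ≫ D)).neg
    have hIdD : KIdeal K ((biprod.inr : Xa ⟶ Va ⊞ Xa) ≫ D) := by
      have heq : eq ≫ (Quotient.functor (quotRel K)).map (biprod.inr ≫ D) =
          eq ≫ (Quotient.functor (quotRel K)).map (0 : Xa ⟶ N) := by
        rw [← he0, ← Functor.map_comp, ← Functor.map_comp]
        apply aux_quot_eq_of_kideal
        simpa using hkey
      have := hepi.left_cancellation _ _ heq
      simpa using aux_kideal_of_quot_eq this
    have hf0D : KIdeal K (f0 ≫ (biprod.inr ≫ D)) := hIdD.precomp f0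
    obtain ⟨h, hh⟩ := tool1 hses hU hf0D
    obtain ⟨h2, hh2⟩ := hQ _ _ hD h
    have hg0cond : (f0 ≫ biprod.inr - ι ≫ h2) ≫ D = 0 := by
      calc (f0 ≫ biprod.inr - ι ≫ h2) ≫ D
          = f0 ≫ (biprod.inr ≫ D) - ι ≫ (h2 ≫ D) := by
            simp [Preadditive.sub_comp, Category.assoc]
        _ = f0 ≫ (biprod.inr ≫ D) - ι ≫ h := by rw [hh2]
        _ = 0 := by rw [hh, sub_self]
    obtain ⟨g0, hg0, -⟩ := E.is_kernel hD _ hg0cond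
    have hfinal : KIdeal K (g0 ≫ e0 - f0) := by
      have e1 : g0 ≫ e0 - f0 = -(ι ≫ (h2 ≫ biprod.snd)) := by
        calc g0 ≫ e0 - f0
            = g0 ≫ (biprod.lift κ e0 ≫ biprod.snd) -
              f0 ≫ ((biprod.inr : Xa ⟶ Va ⊞ Xa) ≫ biprod.snd) := by
              rw [biprod.lift_snd, biprod.inr_snd, Category.comp_id]
          _ = (g0 ≫ biprod.lift κ e0) ≫ biprod.snd -
              (f0 ≫ biprod.inr) ≫ biprod.snd := by rw [Category.assoc, Category.assoc]
          _ = ((f0 ≫ biprod.inr - ι ≫ h2) - f0 ≫ biprod.inr) ≫ biprod.snd := by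
              rw [hg0]
              simp [Preadditive.sub_comp]
          _ = -((ι ≫ h2) ≫ biprod.snd) := by
              rw [sub_sub_cancel_left, Preadditive.neg_comp]
          _ = -(ι ≫ (h2 ≫ biprod.snd)) := by rw [Category.assoc]
      rw [e1]
      exact (KIdeal.of hQK ι (h2 ≫ biprod.snd)).neg
    refine ⟨(Quotient.functor (quotRel K)).map g0, ?_⟩
    rw [← he0, ← hf0, ← Functor.map_comp]
    exact aux_quot_eq_of_kideal hfinal
  -- assemble everything in the quotient category
  have w0 : (Quotient.functor (quotRel K)).map Ωy ≫ (Quotient.functor (quotRel K)).map θ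
      = 0 := by
    rw [← Functor.map_comp]
    exact aux_pi_kideal_eq_zero hKw
  have hMono : Mono ((Quotient.functor (quotRel K)).map Ωy) := by
    constructor
    intro T a b hab
    obtain ⟨Ta⟩ := T
    obtain ⟨a0, ha⟩ := (Quotient.functor (quotRel K)).map_surjective a
    obtain ⟨b0, hb⟩ := (Quotient.functor (quotRel K)).map_surjective b
    rw [← ha, ← hb] at hab ⊢
    rw [← Functor.map_comp, ← Functor.map_comp] at hab
    have h1 := aux_kideal_of_quot_eq hab
    have h2 : KIdeal K ((a0 - b0) ≫ Ωy) := by rwa [Preadditive.sub_comp]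
    exact aux_quot_eq_of_kideal (hmonoΩ _ h2)
  have hEpi : Epi ((Quotient.functor (quotRel K)).map θ) := by
    constructor
    intro T a b hab
    obtain ⟨Ta⟩ := T
    obtain ⟨a0, ha⟩ := (Quotient.functor (quotRel K)).map_surjective a
    obtain ⟨b0, hb⟩ := (Quotient.functor (quotRel K)).map_surjective b
    rw [← ha, ← hb] at hab ⊢
    rw [← Functor.map_comp, ← Functor.map_comp] at hab
    have h1 := aux_kideal_of_quot_eq hab
    have h2 : KIdeal K (θ ≫ (a0 - b0)) := by rwa [Preadditive.comp_sub]
    exact aux_quot_eq_of_kideal (hepiθ _ h2)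
  have hExact : (ShortComplex.mk _ _ w0).Exact := by
    apply ShortComplex.exact_of_g_is_cokernel
    haveI := hEpi
    refine CokernelCofork.IsColimit.ofπ' _ _ ?_
    intro T kq hkq
    obtain ⟨Ta⟩ := T
    have hout : (Quotient.functor (quotRel K)).map (Quot.out kq) = kq := Quot.out_eq kq
    have hkid : KIdeal K (Ωy ≫ Quot.out kq) := by
      have h1 : (Quotient.functor (quotRel K)).map (Ωy ≫ Quot.out kq) =
          (Quotient.functor (quotRel K)).map (0 : W0 ⟶ Ta) := by
        calc (Quotient.functor (quotRel K)).map (Ωy ≫ Quot.out kq)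
            = (Quotient.functor (quotRel K)).map Ωy ≫
              (Quotient.functor (quotRel K)).map (Quot.out kq) := Functor.map_comp _ _ _
          _ = (Quotient.functor (quotRel K)).map Ωy ≫ kq := by rw [hout]
          _ = 0 := hkq
          _ = (Quotient.functor (quotRel K)).map (0 : W0 ⟶ Ta) := aux_pi_map_zero.symm
      simpa using aux_kideal_of_quot_eq h1
    refine ⟨(Quotient.functor (quotRel K)).map (hcoker (Quot.out kq) hkid).choose, ?_⟩
    have hspec := (hcoker (Quot.out kq) hkid).choose_spec
    have h2 : (Quotient.functor (quotRel K)).map (θ ≫ (hcoker (Quot.out kq) hkid).choose) =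
        (Quotient.functor (quotRel K)).map (Quot.out kq) := aux_quot_eq_of_kideal hspec
    exact ((Functor.map_comp _ _ _).symm.trans h2).trans hout
  have hSE : (ShortComplex.mk _ _ w0).ShortExact :=
    { exact := hExact, mono_f := hMono, epi_g := hEpi }
  exact ⟨(Quotient.functor (quotRel K)).obj W0, (Quotient.functor (quotRel K)).obj W1,
    (Quotient.functor (quotRel K)).map Ωy, (Quotient.functor (quotRel K)).map θ, w0,
    hproj ι1 p1 hQ1proj hC1 hses1, hSE, hproj ι0 p0 hQ0proj hC0 hses0⟩
end
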